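/- arXiv:2009.01346 — 6 statements merged into one kernel-verified Lean document; each statement's English description precedes it below -/
import Mathlib

section
/- Let n ≥ 2 be an integer with at least 3 prime factors counting multiplicity, and let ω = e^{2πi/n}. Then there exist a_0, …, a_{n−1}, b_0, …, b_{n−1} ∈ {0,1} such that for every 0 ≤ k ≤ n−1 there exists an integer c_k with Σ_{i=0}^{n−1} a_i ω^{i·k} = ω^{c_k} · Σ_{i=0}^{n−1} b_i ω^{i·k}, yet the sequences (a_i) and (b_i) are not cyclic shifts of each other. -/
/-- `primRoot n` is the primitive `n`-th root of unity `e^{2πi/n}`. -/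
noncomputable def primRoot (n : ℕ) : ℂ :=
  Complex.exp (2 * Real.pi * Complex.I / n)

/-- `expSum n a k = Σ_{i=0}^{n-1} a_i ω^{i·k}` where `ω = e^{2πi/n}`. -/
noncomputable def expSum (n : ℕ) (a : ℕ → ℕ) (k : ℕ) : ℂ :=
  ∑ i ∈ Finset.range n, (a i : ℂ) * primRoot n ^ (i * k)

lemma extract_three (n : ℕ) (hn : 2 ≤ n)
    (hfac : 3 ≤ (Nat.primeFactorsList n).length) :
    ∃ p q m, 2 ≤ p ∧ 2 ≤ q ∧ 2 ≤ m ∧ n = p * q * m := by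
  have hn0 : n ≠ 0 := by omega
  have hprod := Nat.prod_primeFactorsList hn0
  rcases hl : Nat.primeFactorsList n with _ | ⟨p, _ | ⟨q, _ | ⟨r, t⟩⟩⟩ <;>
      rw [hl] at hfac hprod <;> simp only [List.length] at hfac <;> try omega
  have hp : p.Prime := Nat.prime_of_mem_primeFactorsList (by rw [hl]; simp)
  have hq : q.Prime := Nat.prime_of_mem_primeFactorsList (by rw [hl]; simp)
  have hr : r.Prime := Nat.prime_of_mem_primeFactorsList (by rw [hl]; simp)
  have ht : 1 ≤ t.prod := by
    rcases Nat.eq_zero_or_pos t.prod with h | h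
    · exfalso
      rw [List.prod_eq_zero_iff] at h
      have : (0 : ℕ).Prime := Nat.prime_of_mem_primeFactorsList (by rw [hl]; simp [h])
      exact Nat.not_prime_zero this
    · exact h
  have hm : 2 ≤ r * t.prod := by
    have := hr.two_le
    nlinarith
  refine ⟨p, q, r * t.prod, hp.two_le, hq.two_le, hm, ?_⟩
  rw [List.prod_cons, List.prod_cons, List.prod_cons] at hprod
  rw [← hprod]; ring

theorem stmt_1 (n : ℕ) (hn : 2 ≤ n)
    (hfac : 3 ≤ (Nat.primeFactorsList n).length) :
    ∃ a b : ℕ → ℕ,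
      (∀ i < n, a i = 0 ∨ a i = 1) ∧ (∀ i < n, b i = 0 ∨ b i = 1) ∧
      (∀ k < n, ∃ c : ℤ, expSum n a k = primRoot n ^ c * expSum n b k) ∧
      ¬ ∃ j : ℕ, ∀ i < n, b i = a ((i + j) % n) := by
  obtain ⟨p, q, m, hp, hq, hm, hn_eq⟩ := extract_three n hn hfac
  have hn0 : n ≠ 0 := by omega
  set ω : ℂ := primRoot n with hω
  have hprim : IsPrimitiveRoot ω n := Complex.isPrimitiveRoot_exp n hn0
  have hω1 : ω ^ n = 1 := hprim.pow_eq_one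
  have hωn0 : ω ≠ 0 := Complex.exp_ne_zero _
  have hdvd : ∀ t : ℕ, ω ^ t = 1 ↔ n ∣ t := fun t => hprim.pow_eq_one_iff_dvd t
  have hmod : ∀ x : ℕ, ω ^ (x % n) = ω ^ x := by
    intro x
    conv_rhs => rw [← Nat.div_add_mod x n]
    rw [pow_add, pow_mul, hω1, one_pow, one_mul]
  -- the sets
  set SA : Finset ℕ := (Finset.range q).image (fun t => m * t) with hSA
  set SB : Finset ℕ := (Finset.range q).image (fun t => m * t + m) with hSB
  set SE : Finset ℕ := (Finset.range p).image (fun t => q * m * t + 1) with hSE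
  set a : ℕ → ℕ := fun i => if i ∈ SA ∪ SE then 1 else 0 with ha
  set b : ℕ → ℕ := fun i => if i ∈ SB ∪ SE then 1 else 0 with hb
  -- indicator sums
  have indsum : ∀ (S : Finset ℕ), S ⊆ Finset.range n → ∀ k,
      expSum n (fun i => if i ∈ S then 1 else 0) k = ∑ i ∈ S, ω ^ (i * k) := by
    intro S hS k
    unfold expSum
    rw [← Finset.sum_subset hS (by intro x _ hx; simp [hx])]
    apply Finset.sum_congr rfl
    intro i hi
    simp [hi, hω]
  have hq0 : 0 < q := by omega
  have hp0 : 0 < p := by omega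
  have hm0 : 0 < m := by omega
  -- subset facts
  have hSAsub : SA ⊆ Finset.range n := by
    intro x hx
    simp only [hSA, Finset.mem_image, Finset.mem_range] at hx
    obtain ⟨t, ht, rfl⟩ := hx
    simp only [Finset.mem_range]
    nlinarith [Nat.mul_le_mul_left m (show t + 1 ≤ q by omega)]
  have hSBsub : SB ⊆ Finset.range n := by
    intro x hx
    simp only [hSB, Finset.mem_image, Finset.mem_range] at hx
    obtain ⟨t, ht, rfl⟩ := hx
    simp only [Finset.mem_range]
    nlinarith [Nat.mul_le_mul_left m (show t + 1 ≤ q by omega)]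
  have hSEsub : SE ⊆ Finset.range n := by
    intro x hx
    simp only [hSE, Finset.mem_image, Finset.mem_range] at hx
    obtain ⟨t, ht, rfl⟩ := hx
    simp only [Finset.mem_range]
    nlinarith [Nat.mul_le_mul_left (q * m) (show t + 1 ≤ p by omega)]
  -- disjointness
  have hdisjA : Disjoint SA SE := by
    rw [Finset.disjoint_left]
    intro x hx hx'
    simp only [hSA, hSE, Finset.mem_image, Finset.mem_range] at hx hx'
    obtain ⟨t, ht, rfl⟩ := hx
    obtain ⟨s, hs, hst⟩ := hx'
    have h1 : (m * t) % m = 0 := Nat.mul_mod_right m t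
    have h2 : (q * m * s + 1) % m = 1 % m := by
      rw [Nat.add_mod, Nat.mul_mod, Nat.mul_mod_left q m]
      simp
    rw [hst, h1] at h2
    have := Nat.one_mod_eq_one.mpr (by omega : m ≠ 1)
    omega
  have hdisjB : Disjoint SB SE := by
    rw [Finset.disjoint_left]
    intro x hx hx'
    simp only [hSB, hSE, Finset.mem_image, Finset.mem_range] at hx hx'
    obtain ⟨t, ht, rfl⟩ := hx
    obtain ⟨s, hs, hst⟩ := hx'
    have h1 : (m * t + m) % m = 0 := by
      rw [Nat.add_mod, Nat.mul_mod_right]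
      simp
    have h2 : (q * m * s + 1) % m = 1 % m := by
      rw [Nat.add_mod, Nat.mul_mod, Nat.mul_mod_left q m]
      simp
    rw [hst, h1] at h2
    have := Nat.one_mod_eq_one.mpr (by omega : m ≠ 1)
    omega
  -- image sums
  have himg : ∀ (f : ℕ → ℕ) (r k : ℕ), (∀ x y, f x = f y → x = y) →
      ∑ i ∈ (Finset.range r).image f, ω ^ (i * k) = ∑ t ∈ Finset.range r, ω ^ (f t * k) := by
    intro f r k hf
    rw [Finset.sum_image (fun x _ y _ h => hf x y h)]
  have hfA : ∀ x y : ℕ, m * x = m * y → x = y := fun x y h =>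
    Nat.eq_of_mul_eq_mul_left hm0 h
  have hfB : ∀ x y : ℕ, m * x + m = m * y + m → x = y := fun x y h =>
    Nat.eq_of_mul_eq_mul_left hm0 (by omega)
  have hfE : ∀ x y : ℕ, q * m * x + 1 = q * m * y + 1 → x = y := fun x y h =>
    Nat.eq_of_mul_eq_mul_left (show 0 < q * m by positivity) (Nat.add_right_cancel h)
  -- main formulas
  have hA : ∀ k, expSum n a k
      = (∑ t ∈ Finset.range q, (ω ^ (m * k)) ^ t)
        + ω ^ k * ∑ t ∈ Finset.range p, (ω ^ (q * m * k)) ^ t := by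
    intro k
    rw [ha]
    rw [indsum _ (Finset.union_subset hSAsub hSEsub) k, Finset.sum_union hdisjA,
      hSA, hSE, himg _ _ _ hfA, himg _ _ _ hfE]
    congr 1
    · apply Finset.sum_congr rfl
      intro t _
      rw [← pow_mul, mul_right_comm]
    · rw [Finset.mul_sum]
      apply Finset.sum_congr rfl
      intro t _
      rw [← pow_mul, ← pow_add]
      congr 1
      ring
  have hB : ∀ k, expSum n b k
      = ω ^ (m * k) * (∑ t ∈ Finset.range q, (ω ^ (m * k)) ^ t)
        + ω ^ k * ∑ t ∈ Finset.range p, (ω ^ (q * m * k)) ^ t := by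
    intro k
    rw [hb]
    rw [indsum _ (Finset.union_subset hSBsub hSEsub) k, Finset.sum_union hdisjB,
      hSB, hSE, himg _ _ _ hfB, himg _ _ _ hfE]
    congr 1
    · rw [Finset.mul_sum]
      apply Finset.sum_congr rfl
      intro t _
      rw [← pow_mul, ← pow_add]
      congr 1
      ring
    · rw [Finset.mul_sum]
      apply Finset.sum_congr rfl
      intro t _
      rw [← pow_mul, ← pow_add]
      congr 1
      ring
  -- auxiliary non-oneness facts
  have hne : ∀ x : ℕ, 0 < x → x < n → ω ^ x ≠ 1 := by
    intro x hx0 hxn h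
    have := (hdvd x).mp h
    have := Nat.le_of_dvd hx0 this
    omega
  have h4pq : 4 ≤ p * q := by nlinarith
  have hm_lt : m < n := by
    rw [hn_eq]
    nlinarith [Nat.mul_le_mul_right m h4pq]
  have hmq_lt : m * q < n := by
    rw [hn_eq]
    nlinarith [Nat.mul_le_mul_left (m * q) hp]
  have hqm_lt : q * m < n := by
    rw [hn_eq]
    nlinarith [Nat.mul_le_mul_left (q * m) hp]
  refine ⟨a, b, ?_, ?_, ?_, ?_⟩
  · intro i _
    by_cases h : i ∈ SA ∪ SE
    · exact Or.inr (if_pos h)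
    · exact Or.inl (if_neg h)
  · intro i _
    by_cases h : i ∈ SB ∪ SE
    · exact Or.inr (if_pos h)
    · exact Or.inl (if_neg h)
  · -- the phase relation
    intro k hk
    by_cases h1 : ω ^ (m * k) = 1
    · exact ⟨0, by rw [zpow_zero, one_mul, hA, hB, h1, one_mul]⟩
    by_cases h2 : ω ^ (q * m * k) = 1
    · refine ⟨0, ?_⟩
      have hSA0 : (∑ t ∈ Finset.range q, (ω ^ (m * k)) ^ t) = 0 := by
        rw [geom_sum_eq h1, ← pow_mul, show m * k * q = q * m * k by ring, h2]
        simp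
      rw [zpow_zero, one_mul, hA, hB, hSA0]
      simp
    · refine ⟨-((m * k : ℕ) : ℤ), ?_⟩
      have hSE0 : (∑ t ∈ Finset.range p, (ω ^ (q * m * k)) ^ t) = 0 := by
        rw [geom_sum_eq h2, ← pow_mul, show q * m * k * p = n * k by rw [hn_eq]; ring,
          pow_mul, hω1, one_pow]
        simp
      rw [hA, hB, hSE0, mul_zero, add_zero, add_zero, zpow_neg, zpow_natCast, ← mul_assoc,
        inv_mul_cancel₀ (pow_ne_zero _ hωn0), one_mul]
  · -- not a cyclic shift
    rintro ⟨j, hj⟩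
    obtain ⟨j', hj'eq, hj'n⟩ : ∃ j', j % n = j' ∧ j' < n :=
      ⟨j % n, rfl, Nat.mod_lt _ (by omega)⟩
    have hjj : ∀ i, i < n → b i = a ((i + j') % n) := by
      intro i hi
      rw [hj i hi]
      congr 1
      rw [← hj'eq, Nat.add_mod_mod]
    -- reindex the sum
    have hre : expSum n b 1 = ω ^ (n - j') * expSum n a 1 := by
      unfold expSum
      rw [Finset.mul_sum]
      calc ∑ i ∈ Finset.range n, (b i : ℂ) * ω ^ (i * 1)
          = ∑ i ∈ Finset.range n, (a ((i + j') % n) : ℂ) * ω ^ (i * 1) := by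
            refine Finset.sum_congr rfl fun i hi => ?_
            rw [hjj i (Finset.mem_range.mp hi)]
        _ = ∑ x ∈ Finset.range n, (a x : ℂ) * ω ^ (((x + (n - j')) % n) * 1) := by
            refine Finset.sum_nbij' (fun x => (x + j') % n) (fun x => (x + (n - j')) % n)
              ?_ ?_ ?_ ?_ ?_
            · intro x _
              exact Finset.mem_range.mpr (Nat.mod_lt _ (by omega))
            · intro x _
              exact Finset.mem_range.mpr (Nat.mod_lt _ (by omega))
            · intro x hx
              have hx' := Finset.mem_range.mp hx
              show ((x + j') % n + (n - j')) % n = x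
              rw [Nat.mod_add_mod, show x + j' + (n - j') = x + n by omega,
                Nat.add_mod_right, Nat.mod_eq_of_lt hx']
            · intro x hx
              have hx' := Finset.mem_range.mp hx
              show ((x + (n - j')) % n + j') % n = x
              rw [Nat.mod_add_mod, show x + (n - j') + j' = x + n by omega,
                Nat.add_mod_right, Nat.mod_eq_of_lt hx']
            · intro x hx
              have hx' := Finset.mem_range.mp hx
              have he : (((x + j') % n) + (n - j')) % n = x := by
                rw [Nat.mod_add_mod, show x + j' + (n - j') = x + n by omega,
                  Nat.add_mod_right, Nat.mod_eq_of_lt hx']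
              rw [he]
        _ = ∑ x ∈ Finset.range n, ω ^ (n - j') * ((a x : ℂ) * ω ^ (x * 1)) := by
            refine Finset.sum_congr rfl fun x _ => ?_
            rw [mul_one, mul_one, hmod, pow_add]
            ring
    -- compute both sides at k = 1
    have hA1 := hA 1
    have hB1 := hB 1
    simp only [mul_one] at hA1 hB1
    have hE0 : (∑ t ∈ Finset.range p, (ω ^ (q * m)) ^ t) = 0 := by
      rw [geom_sum_eq (hne _ (by positivity) hqm_lt), ← pow_mul,
        show q * m * p = n by rw [hn_eq]; ring, hω1]
      simp
    have hG : (∑ t ∈ Finset.range q, (ω ^ m) ^ t) ≠ 0 := by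
      rw [geom_sum_eq (hne _ (by omega) hm_lt), ← pow_mul]
      exact div_ne_zero (sub_ne_zero.mpr (hne _ (by positivity) hmq_lt))
        (sub_ne_zero.mpr (hne _ (by omega) hm_lt))
    rw [hA1, hB1, hE0, mul_zero, add_zero, add_zero] at hre
    have hcancel : ω ^ m = ω ^ (n - j') := mul_right_cancel₀ hG hre
    have hone : ω ^ (m + j') = 1 := by
      rw [pow_add, hcancel, ← pow_add, show n - j' + j' = n by omega, hω1]
    have hdj : n ∣ m + j' := (hdvd _).mp hone
    have hmj : m + j' = n := by
      obtain ⟨c, hc⟩ := hdj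
      have hc2 : c < 2 := by
        by_contra hcc
        push_neg at hcc
        have : n * 2 ≤ n * c := Nat.mul_le_mul_left n hcc
        omega
      interval_cases c <;> omega
    -- derive the contradiction at i = 1
    have h1n : (1 : ℕ) < n := by omega
    have hwit := hjj 1 h1n
    have hidx : (1 + j') % n = n - m + 1 := by
      rw [Nat.mod_eq_of_lt (by omega)]
      omega
    rw [hidx] at hwit
    have hb1 : b 1 = 1 := by
      rw [hb]
      have h1mem : (1 : ℕ) ∈ SB ∪ SE := by
        refine Finset.mem_union_right _ ?_
        rw [hSE]
        simp only [Finset.mem_image, Finset.mem_range]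
        exact ⟨0, hp0, by ring⟩
      simp [h1mem]
    have ha1 : a (n - m + 1) = 0 := by
      rw [ha]
      have hnot : (n - m + 1) ∉ SA ∪ SE := by
        intro hmem
        rcases Finset.mem_union.mp hmem with hx | hx
        · rw [hSA] at hx
          simp only [Finset.mem_image, Finset.mem_range] at hx
          obtain ⟨t, ht, hte⟩ := hx
          have e2 : m * (t + 1) = m * (p * q) + 1 := by
            rw [show m * (t + 1) = m * t + m by ring, hte,
              show m * (p * q) = p * q * m by ring, ← hn_eq]
            omega
          have e3 : m * (t + 1) % m = 0 := Nat.mul_mod_right m (t + 1)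
          have e4 : (m * (p * q) + 1) % m = 1 % m := Nat.mul_add_mod m (p * q) 1
          have e5 : (1 : ℕ) % m = 1 := Nat.one_mod_eq_one.mpr (by omega)
          rw [e2, e4, e5] at e3
          omega
        · rw [hSE] at hx
          simp only [Finset.mem_image, Finset.mem_range] at hx
          obtain ⟨s, hs, hse⟩ := hx
          have e1 : q * m * s + m = n := by omega
          rw [hn_eq] at e1
          have e2 : m * (q * s + 1) = m * (p * q) := by
            rw [show m * (q * s + 1) = q * m * s + m by ring, e1]
            ring
          have e3 : q * s + 1 = p * q := Nat.eq_of_mul_eq_mul_left hm0 e2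
          have e4 : (q * s + 1) % q = 1 % q := Nat.mul_add_mod q s 1
          have e5 : (p * q) % q = 0 := Nat.mul_mod_left p q
          have e6 : (1 : ℕ) % q = 1 := Nat.one_mod_eq_one.mpr (by omega)
          rw [e3, e5, e6] at e4
          omega
      simp [hnot]
    rw [hb1, ha1] at hwit
    exact one_ne_zero hwit
end

section
/- Let n = p be a prime and ω = e^{2πi/p}. Suppose a_0, …, a_{p−1}, b_0, …, b_{p−1} ∈ {0,1} are such that for every 0 ≤ k ≤ p−1 there exists an integer c_k with Σ_{i=0}^{p−1} a_i ω^{i·k} = ω^{c_k} · Σ_{i=0}^{p−1} b_i ω^{i·k}. Then the sequences (a_i) and (b_i) are cyclic shifts of each other. -/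
lemma pow_mod_aux {ζ : ℂ} {p : ℕ} (hζp : ζ ^ p = 1) (n : ℕ) :
    ζ ^ (n % p) = ζ ^ n := by
  conv_rhs => rw [← Nat.div_add_mod n p]
  rw [pow_add, pow_mul, hζp, one_pow, one_mul]

/-- Key lemma: if a rational combination of powers of the primitive `p`-th root
vanishes and the coefficients sum to zero, all coefficients (below `p`) vanish. -/
lemma key_lemma (p : ℕ) (hp : p.Prime) (f : ℕ → ℚ)
    (h1 : ∑ i ∈ Finset.range p, (f i : ℂ) * primRoot p ^ i = 0)
    (h2 : ∑ i ∈ Finset.range p, f i = 0) : ∀ i < p, f i = 0 := by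
  haveI : Fact p.Prime := ⟨hp⟩
  have hζ : IsPrimitiveRoot (primRoot p) p :=
    Complex.isPrimitiveRoot_exp p hp.ne_zero
  set P : Polynomial ℚ := ∑ i ∈ Finset.range p, Polynomial.C (f i) * Polynomial.X ^ i with hP
  have hcoeff : ∀ k, P.coeff k = if k < p then f k else 0 := by
    intro k
    rw [hP, Polynomial.finset_sum_coeff]
    simp only [Polynomial.coeff_C_mul, Polynomial.coeff_X_pow, mul_ite, mul_one, mul_zero]
    rw [Finset.sum_ite_eq (Finset.range p) k f]
    simp [Finset.mem_range]
  have haev : Polynomial.aeval (primRoot p) P = 0 := by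
    rw [hP, map_sum]
    simpa using h1
  have hdvd : Polynomial.cyclotomic p ℚ ∣ P := by
    rw [Polynomial.cyclotomic_eq_minpoly_rat hζ hp.pos]
    exact minpoly.dvd ℚ _ haev
  obtain ⟨Q, hQ⟩ := hdvd
  by_cases hQ0 : Q = 0
  · intro i hi
    have h0 : P.coeff i = 0 := by rw [hQ, hQ0, mul_zero, Polynomial.coeff_zero]
    rw [hcoeff i, if_pos hi] at h0
    exact h0
  · have hcyc_ne : Polynomial.cyclotomic p ℚ ≠ 0 := Polynomial.cyclotomic_ne_zero p ℚ
    have hdegP : P.natDegree ≤ p - 1 := by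
      apply Polynomial.natDegree_le_iff_coeff_eq_zero.mpr
      intro N hN
      rw [hcoeff N, if_neg (by omega)]
    have hdegc : (Polynomial.cyclotomic p ℚ).natDegree = p - 1 := by
      rw [Polynomial.natDegree_cyclotomic, Nat.totient_prime hp]
    have hdegQ : Q.natDegree = 0 := by
      have hm := Polynomial.natDegree_mul hcyc_ne hQ0
      rw [← hQ, hdegc] at hm
      have := hp.two_le
      omega
    obtain ⟨lam, hlam⟩ := Polynomial.natDegree_eq_zero.mp hdegQ
    have hcoeffcyc : ∀ i < p, (Polynomial.cyclotomic p ℚ).coeff i = 1 := by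
      intro i hi
      rw [Polynomial.cyclotomic_prime ℚ p, Polynomial.finset_sum_coeff]
      simp only [Polynomial.coeff_X_pow]
      rw [Finset.sum_ite_eq (Finset.range p) i (fun _ => (1 : ℚ))]
      simp [Finset.mem_range, hi]
    have hconst : ∀ i < p, f i = lam := by
      intro i hi
      have h1' := hcoeff i
      rw [hQ, ← hlam, Polynomial.coeff_mul_C, hcoeffcyc i hi, one_mul, if_pos hi] at h1'
      exact h1'.symm
    have hsum : (p : ℚ) * lam = 0 := by
      rw [← h2, Finset.sum_congr rfl (fun i hi => hconst i (Finset.mem_range.mp hi))]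
      simp [Finset.sum_const, mul_comm]
    have hlam0 : lam = 0 := by
      have hpne : (p : ℚ) ≠ 0 := Nat.cast_ne_zero.mpr hp.ne_zero
      exact (mul_eq_zero.mp hsum).resolve_left hpne
    intro i hi
    rw [hconst i hi, hlam0]

theorem stmt_2 (p : ℕ) (hp : p.Prime)
    (a b : ℕ → ℕ)
    (ha : ∀ i < p, a i = 0 ∨ a i = 1) (hb : ∀ i < p, b i = 0 ∨ b i = 1)
    (h : ∀ k < p, ∃ c : ℤ, expSum p a k = primRoot p ^ c * expSum p b k) :
    ∃ j : ℕ, ∀ i < p, b i = a ((i + j) % p) := by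
  have hp2 : 2 ≤ p := hp.two_le
  have hζ : IsPrimitiveRoot (primRoot p) p :=
    Complex.isPrimitiveRoot_exp p hp.ne_zero
  set ζ := primRoot p with hζdef
  have hζp : ζ ^ p = 1 := hζ.pow_eq_one
  have hζ0 : ζ ≠ 0 := by
    intro h0
    rw [h0, zero_pow hp.ne_zero] at hζp
    exact zero_ne_one hζp
  have habs : ‖ζ‖ = 1 := hζ.norm'_eq_one hp.ne_zero
  -- sums of a and b agree
  obtain ⟨c0, hc0⟩ := h 0 hp.pos
  have hsum0a : expSum p a 0 = ((∑ i ∈ Finset.range p, a i : ℕ) : ℂ) := by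
    simp [expSum]
  have hsum0b : expSum p b 0 = ((∑ i ∈ Finset.range p, b i : ℕ) : ℂ) := by
    simp [expSum]
  have hsab : (∑ i ∈ Finset.range p, a i) = ∑ i ∈ Finset.range p, b i := by
    rw [hsum0a, hsum0b] at hc0
    have habs' : ‖ζ ^ c0‖ = 1 := by rw [norm_zpow, habs, one_zpow]
    have h1 : ‖((∑ i ∈ Finset.range p, a i : ℕ) : ℂ)‖ =
        ‖((∑ i ∈ Finset.range p, b i : ℕ) : ℂ)‖ := by
      rw [hc0, norm_mul, habs', one_mul]
    simp only [Complex.norm_natCast] at h1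
    exact_mod_cast h1
  obtain ⟨c1, hc1⟩ := h 1 hp.one_lt
  by_cases hB : expSum p b 1 = 0
  · -- both sides have vanishing first Fourier coefficient: both constant, equal
    have hA : expSum p a 1 = 0 := by rw [hc1, hB, mul_zero]
    have geom : ∑ i ∈ Finset.range p, ζ ^ i = 0 := hζ.geom_sum_eq_zero hp.one_lt
    have hqp : (p : ℚ) ≠ 0 := Nat.cast_ne_zero.mpr hp.ne_zero
    have key_of : ∀ (g : ℕ → ℕ), expSum p g 1 = 0 →
        ∀ i < p, (g i : ℚ) = (∑ i ∈ Finset.range p, g i : ℕ) / p := by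
      intro g hg i hi
      have hz := key_lemma p hp (fun i => (g i : ℚ) - (∑ i ∈ Finset.range p, g i : ℕ) / p)
        ?_ ?_ i hi
      · linarith [hz]
      · have : ∑ i ∈ Finset.range p,
            (((g i : ℚ) - (∑ i ∈ Finset.range p, g i : ℕ) / p : ℚ) : ℂ) * ζ ^ i
            = expSum p g 1 -
              (((∑ i ∈ Finset.range p, g i : ℕ) : ℂ) / p) * ∑ i ∈ Finset.range p, ζ ^ i := by
          rw [expSum, Finset.mul_sum, ← Finset.sum_sub_distrib]
          apply Finset.sum_congr rfl
          intro i _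
          push_cast
          ring
        rw [this, hg, geom, mul_zero, sub_zero]
      · rw [Finset.sum_sub_distrib, Finset.sum_const, Finset.card_range]
        push_cast [nsmul_eq_mul]
        field_simp
        ring
    have hac := key_of a hA
    have hbc := key_of b hB
    refine ⟨0, fun i hi => ?_⟩
    rw [Nat.add_zero, Nat.mod_eq_of_lt hi]
    have : (b i : ℚ) = (a i : ℚ) := by
      rw [hbc i hi, hac i hi, hsab]
    exact_mod_cast this
  · -- main case: shift by j = c1 mod p
    set j := (c1 % (p : ℤ)).toNat with hjdef
    have hpz : (0 : ℤ) < p := by exact_mod_cast hp.pos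
    have hmod_nonneg : 0 ≤ c1 % p := Int.emod_nonneg c1 (by exact_mod_cast hp.ne_zero)
    have hmod_lt : c1 % p < p := Int.emod_lt_of_pos c1 hpz
    have hjp : j < p := by
      rw [hjdef]
      omega
    have hzc : ζ ^ c1 = ζ ^ j := by
      have step1 : ζ ^ c1 = ζ ^ (c1 % p) := by
        conv_lhs => rw [← Int.mul_ediv_add_emod c1 p]
        rw [zpow_add₀ hζ0, zpow_mul, zpow_natCast, hζp, one_zpow, one_mul]
      rw [step1, ← Int.toNat_of_nonneg hmod_nonneg, zpow_natCast]
    -- index manipulation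
    have hidx : ∀ i < p, ((i + j) % p + (p - j)) % p = i := by
      intro i hi
      have h1 : ((i + j) % p + (p - j)) % p = (i + j + (p - j)) % p :=
        (Nat.ModEq.add_right (p - j) (Nat.mod_modEq (i + j) p))
      rw [h1]
      have h2 : i + j + (p - j) = i + p := by omega
      rw [h2, Nat.add_mod_right, Nat.mod_eq_of_lt hi]
    -- reindexing lemma for complex sums
    have hreC : ∑ i ∈ Finset.range p, ((b ((i + (p - j)) % p) : ℚ) : ℂ) * ζ ^ i
        = ζ ^ j * ∑ i ∈ Finset.range p, (b i : ℂ) * ζ ^ (i * 1) := by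
      rw [Finset.mul_sum]
      symm
      apply Finset.sum_nbij' (i := fun i => (i + j) % p) (j := fun i => (i + (p - j)) % p)
      · intro i hi
        exact Finset.mem_range.mpr (Nat.mod_lt _ hp.pos)
      · intro i hi
        exact Finset.mem_range.mpr (Nat.mod_lt _ hp.pos)
      · intro i hi
        exact hidx i (Finset.mem_range.mp hi)
      · intro i hi
        have hi' := Finset.mem_range.mp hi
        have h1 : ((i + (p - j)) % p + j) % p = (i + (p - j) + j) % p :=
          (Nat.ModEq.add_right j (Nat.mod_modEq (i + (p - j)) p))
        rw [h1]
        have h2 : i + (p - j) + j = i + p := by omega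
        rw [h2, Nat.add_mod_right, Nat.mod_eq_of_lt hi']
      · intro i hi
        rw [hidx i (Finset.mem_range.mp hi)]
        rw [pow_mod_aux hζp (i + j), pow_add, mul_one]
        push_cast
        ring
    -- reindexing lemma for rational sums
    have hreQ : ∑ i ∈ Finset.range p, (b ((i + (p - j)) % p) : ℚ)
        = ∑ i ∈ Finset.range p, (b i : ℚ) := by
      symm
      apply Finset.sum_nbij' (i := fun i => (i + j) % p) (j := fun i => (i + (p - j)) % p)
      · intro i hi
        exact Finset.mem_range.mpr (Nat.mod_lt _ hp.pos)
      · intro i hi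
        exact Finset.mem_range.mpr (Nat.mod_lt _ hp.pos)
      · intro i hi
        exact hidx i (Finset.mem_range.mp hi)
      · intro i hi
        have hi' := Finset.mem_range.mp hi
        have h1 : ((i + (p - j)) % p + j) % p = (i + (p - j) + j) % p :=
          (Nat.ModEq.add_right j (Nat.mod_modEq (i + (p - j)) p))
        rw [h1]
        have h2 : i + (p - j) + j = i + p := by omega
        rw [h2, Nat.add_mod_right, Nat.mod_eq_of_lt hi']
      · intro i hi
        rw [hidx i (Finset.mem_range.mp hi)]
    have hz := key_lemma p hp (fun i => (a i : ℚ) - (b ((i + (p - j)) % p) : ℚ)) ?_ ?_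
    · refine ⟨j, fun i hi => ?_⟩
      have hm : (i + j) % p < p := Nat.mod_lt _ hp.pos
      have := hz ((i + j) % p) hm
      rw [hidx i hi] at this
      have : (a ((i + j) % p) : ℚ) = (b i : ℚ) := by linarith
      exact_mod_cast this.symm
    · have expand : ∑ i ∈ Finset.range p,
          (((a i : ℚ) - (b ((i + (p - j)) % p) : ℚ) : ℚ) : ℂ) * ζ ^ i
          = expSum p a 1 - ∑ i ∈ Finset.range p, ((b ((i + (p - j)) % p) : ℚ) : ℂ) * ζ ^ i := by
        rw [expSum, ← Finset.sum_sub_distrib]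
        apply Finset.sum_congr rfl
        intro i _
        push_cast
        ring
      rw [expand, hreC,
        show (∑ i ∈ Finset.range p, ((b i : ℕ) : ℂ) * ζ ^ (i * 1)) = expSum p b 1 from rfl,
        ← hzc, ← hc1, sub_self]
    · rw [Finset.sum_sub_distrib, hreQ, sub_eq_zero]
      exact_mod_cast congrArg (fun n : ℕ => (n : ℚ)) hsab
end

section
/- Let n = p·q where p and q are distinct odd primes, and let ω = e^{2πi/n}. Suppose a_0, …, a_{n−1}, b_0, …, b_{n−1} ∈ {0,1} are such that for every 0 ≤ k ≤ n−1 there exists an integer c_k with Σ_{i=0}^{n−1} a_i ω^{i·k} = ω^{c_k} · Σ_{i=0}^{n−1} b_i ω^{i·k}. Then the sequences (a_i) and (b_i) are cyclic shifts of each other. -/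
open Polynomial Finset

noncomputable def seqPoly (n : ℕ) (a : ℕ → ℕ) : Polynomial ℤ :=
  ∑ i ∈ Finset.range n, Polynomial.C ((a i : ℤ)) * Polynomial.X ^ i

lemma aeval_seqPoly (n : ℕ) (a : ℕ → ℕ) (z : ℂ) :
    Polynomial.aeval z (seqPoly n a) = ∑ i ∈ Finset.range n, (a i : ℂ) * z ^ i := by
  simp [seqPoly]

lemma expSum_eq_aeval (n : ℕ) (a : ℕ → ℕ) (k : ℕ) :
    expSum n a k = Polynomial.aeval ((primRoot n) ^ k) (seqPoly n a) := by
  rw [aeval_seqPoly, expSum]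
  refine Finset.sum_congr rfl fun i _ => ?_
  rw [← pow_mul, mul_comm k i]

lemma primRoot_isPrimitive {n : ℕ} (hn : 0 < n) : IsPrimitiveRoot (primRoot n) n :=
  Complex.isPrimitiveRoot_exp n hn.ne'

lemma root_dvd {n : ℕ} (hn : 0 < n) {η : ℂ} (hη : IsPrimitiveRoot η n) {f : Polynomial ℤ}
    (hf : Polynomial.aeval η f = 0) : Polynomial.cyclotomic n ℤ ∣ f := by
  rw [Polynomial.cyclotomic_eq_minpoly hη hn]
  exact minpoly.isIntegrallyClosed_dvd (hη.isIntegral hn) hf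

lemma aeval_cyclo {n : ℕ} (hn : 0 < n) {η : ℂ} (hη : IsPrimitiveRoot η n) :
    Polynomial.aeval η (Polynomial.cyclotomic n ℤ) = 0 := by
  haveI : NeZero ((n : ℂ)) := ⟨Nat.cast_ne_zero.mpr hn.ne'⟩
  rw [Polynomial.aeval_def, Polynomial.eval₂_eq_eval_map, Polynomial.map_cyclotomic]
  exact Polynomial.isRoot_cyclotomic_iff.mpr hη

lemma aeval_of_cyclo_dvd {n : ℕ} (hn : 0 < n) {η : ℂ} (hη : IsPrimitiveRoot η n)
    {f : Polynomial ℤ} (hdvd : Polynomial.cyclotomic n ℤ ∣ f) : Polynomial.aeval η f = 0 := by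
  obtain ⟨g, rfl⟩ := hdvd
  rw [map_mul, aeval_cyclo hn hη, zero_mul]

lemma zpow_norm {n : ℕ} (hn : 0 < n) {ω : ℂ} (hω : IsPrimitiveRoot ω n) (c : ℤ) :
    ∃ t : ℕ, ω ^ c = ω ^ t := by
  refine ⟨(c % (n : ℤ)).toNat, ?_⟩
  have h0 : ω ≠ 0 := hω.ne_zero hn.ne'
  have h1 : ω ^ (n : ℤ) = 1 := by
    rw [zpow_natCast]; exact hω.pow_eq_one
  have hc : (n : ℤ) * (c / (n : ℤ)) + c % (n : ℤ) = c := Int.mul_ediv_add_emod c n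
  have hnn : (0 : ℤ) ≤ c % (n : ℤ) := Int.emod_nonneg c (by exact_mod_cast hn.ne')
  calc ω ^ c = ω ^ ((n : ℤ) * (c / (n : ℤ)) + c % (n : ℤ)) := by rw [hc]
    _ = (ω ^ (n : ℤ)) ^ (c / (n : ℤ)) * ω ^ (c % (n : ℤ)) := by
        rw [zpow_add₀ h0, zpow_mul]
    _ = ω ^ (c % (n : ℤ)) := by rw [h1, one_zpow, one_mul]
    _ = ω ^ (c % (n : ℤ)).toNat := by rw [← zpow_natCast, Int.toNat_of_nonneg hnn]

lemma prod_one_sub {q : ℕ} (hq : q.Prime) {η : ℂ} (hη : IsPrimitiveRoot η q) :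
    ∏ i ∈ Finset.Ico 1 q, (1 - η ^ i) = (q : ℂ) := by
  haveI : Fact q.Prime := ⟨hq⟩
  have himg : primitiveRoots q ℂ = (Finset.Ico 1 q).image (fun i => η ^ i) := by
    apply Finset.Subset.antisymm
    · intro μ hμ
      rw [mem_primitiveRoots hq.pos] at hμ
      obtain ⟨i, hi, rfl⟩ := hη.eq_pow_of_pow_eq_one hμ.pow_eq_one
      have hi0 : i ≠ 0 := by
        rintro rfl
        exact (hμ.ne_one hq.one_lt) (pow_zero η)
      exact Finset.mem_image.mpr ⟨i, Finset.mem_Ico.mpr ⟨Nat.one_le_iff_ne_zero.mpr hi0, hi⟩, rfl⟩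
    · intro μ hμ
      obtain ⟨i, hi, rfl⟩ := Finset.mem_image.mp hμ
      rw [Finset.mem_Ico] at hi
      rw [mem_primitiveRoots hq.pos]
      exact hη.pow_of_coprime i
        (Nat.coprime_comm.mp ((hq.coprime_iff_not_dvd).mpr
          (Nat.not_dvd_of_pos_of_lt (hi.1) hi.2)))
  have := congrArg (Polynomial.eval (1 : ℂ)) (Polynomial.cyclotomic_eq_prod_X_sub_primitiveRoots hη)
  rw [Polynomial.eval_one_cyclotomic_prime, Polynomial.eval_prod] at this
  rw [himg] at this
  rw [Finset.prod_image (fun i hi j hj hij => ?_)] at this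
  · rw [this]
    exact Finset.prod_congr rfl fun i _ => by simp
  · rw [Finset.mem_coe, Finset.mem_Ico] at hi hj
    exact hη.pow_inj hi.2 hj.2 hij


lemma fiber_eq {p q v : ℕ} (hv : v < q) :
    (Finset.range (p * q)).filter (fun x => x % q = v) =
      (Finset.range p).image (fun t => v + q * t) := by
  have hq : 0 < q := lt_of_le_of_lt (Nat.zero_le v) hv
  ext x
  simp only [Finset.mem_filter, Finset.mem_range, Finset.mem_image]
  constructor
  · rintro ⟨hx, hxv⟩
    refine ⟨x / q, ?_, ?_⟩
    · exact Nat.div_lt_of_lt_mul (by rwa [mul_comm] at hx)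
    · rw [← hxv]; exact Nat.mod_add_div x q
  · rintro ⟨t, ht, rfl⟩
    constructor
    · calc v + q * t < q + q * t := by omega
        _ = q * (t + 1) := by ring
        _ ≤ q * p := Nat.mul_le_mul_left q ht
        _ = p * q := mul_comm q p
    · rw [Nat.add_mul_mod_self_left, Nat.mod_eq_of_lt hv]

lemma fiber_card {p q v : ℕ} (hv : v < q) :
    ((Finset.range (p * q)).filter (fun x => x % q = v)).card = p := by
  have hq : 0 < q := lt_of_le_of_lt (Nat.zero_le v) hv
  rw [fiber_eq hv, Finset.card_image_of_injective _
    (fun s t hst => Nat.eq_of_mul_eq_mul_left hq (by omega)), Finset.card_range]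

lemma phase_lemma {p q : ℕ} (hp : p.Prime) (hq : q.Prime) (hop : Odd p) (hne : p ≠ q)
    {ω : ℂ} (hω : IsPrimitiveRoot ω (p * q)) (PA PB : Polynomial ℤ) (c : ℕ)
    (hB : Polynomial.aeval (ω ^ p) PB ≠ 0)
    (hc : Polynomial.aeval (ω ^ p) PA = ω ^ c * Polynomial.aeval (ω ^ p) PB) :
    ∃ t : ℕ, Polynomial.aeval (ω ^ p) PA = (ω ^ p) ^ t * Polynomial.aeval (ω ^ p) PB := by
  have hp2 : 2 < p := lt_of_le_of_ne hp.two_le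
    (fun h => (Nat.not_odd_iff_even.mpr (h ▸ even_two)) hop)
  have hq2 : 1 < q := hq.one_lt
  have hnpos : 0 < p * q := Nat.mul_pos hp.pos hq.pos
  have hpq : ¬ p ∣ q := fun hd => hne ((Nat.prime_dvd_prime_iff_eq hp hq).mp hd)
  obtain ⟨α, hα1, hαnd⟩ : ∃ α : ℕ, (α = 1 ∨ α = 2) ∧ ¬ p ∣ 1 + q * α := by
    by_cases h1 : p ∣ 1 + q * 1
    · refine ⟨2, Or.inr rfl, fun h2 => ?_⟩
      have hs := Nat.dvd_sub h2 h1
      have heq : 1 + q * 2 - (1 + q * 1) = q := by omega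
      rw [heq] at hs
      exact hpq hs
    · exact ⟨1, Or.inl rfl, h1⟩
  set t' : ℕ := 1 + q * α with ht'
  have hcop : Nat.Coprime t' (p * q) := by
    have h1 : Nat.Coprime t' p := Nat.coprime_comm.mp ((hp.coprime_iff_not_dvd).mpr hαnd)
    have h2 : Nat.Coprime t' q := by
      have hnd : ¬ q ∣ t' := by
        intro hd
        have h1' : q ∣ 1 := by
          have : t' = q * α + 1 := by omega
          rw [this] at hd
          exact (Nat.dvd_add_right (Dvd.intro α rfl)).mp hd
        have := Nat.le_of_dvd one_pos h1'
        omega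
      exact Nat.coprime_comm.mp ((hq.coprime_iff_not_dvd).mpr hnd)
    exact Nat.Coprime.mul_right h1 h2
  have hprim : IsPrimitiveRoot (ω ^ t') (p * q) := hω.pow_of_coprime t' hcop
  set G2 : Polynomial ℤ := PA.comp (X ^ p) - X ^ c * (PB.comp (X ^ p)) with hG2
  have hroot : Polynomial.aeval ω G2 = 0 := by
    simp only [hG2, map_sub, map_mul, map_pow, Polynomial.aeval_comp, aeval_X, hc]
    ring
  have hdvd : Polynomial.cyclotomic (p * q) ℤ ∣ G2 := root_dvd hnpos hω hroot
  have hroot2 : Polynomial.aeval (ω ^ t') G2 = 0 := aeval_of_cyclo_dvd hnpos hprim hdvd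
  have hpow : (ω ^ t') ^ p = ω ^ p := by
    have h5 : t' * p = p + (p * q) * α := by rw [ht']; ring
    rw [← pow_mul, h5, pow_add, pow_mul, hω.pow_eq_one, one_pow, mul_one]
  have hkey : Polynomial.aeval (ω ^ p) PA = (ω ^ t') ^ c * Polynomial.aeval (ω ^ p) PB := by
    rw [hG2] at hroot2
    simp only [map_sub, map_mul, map_pow, Polynomial.aeval_comp, aeval_X, hpow] at hroot2
    linear_combination hroot2
  have hph : ω ^ (t' * c) = ω ^ c := by
    have h1 : (ω ^ t') ^ c * Polynomial.aeval (ω ^ p) PB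
        = ω ^ c * Polynomial.aeval (ω ^ p) PB := by rw [← hkey, hc]
    have h2 := mul_right_cancel₀ hB h1
    rwa [← pow_mul] at h2
  have hwne : ω ≠ 0 := hω.ne_zero hnpos.ne'
  have hdvd2 : (p * q) ∣ (t' * c - c) := by
    have hle : c ≤ t' * c := Nat.le_mul_of_pos_left c (by positivity)
    have h3 : ω ^ (t' * c - c) * ω ^ c = ω ^ c := by
      rw [← pow_add, Nat.sub_add_cancel hle, hph]
    have h4 : ω ^ (t' * c - c) = 1 :=
      mul_right_cancel₀ (pow_ne_zero _ hwne) (by rw [h3, one_mul])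
    exact (hω.pow_eq_one_iff_dvd _).mp h4
  have heq2 : t' * c - c = q * (α * c) := by
    have : t' * c = c + q * (α * c) := by rw [ht']; ring
    omega
  rw [heq2] at hdvd2
  have hpc : p ∣ c := by
    have h3 : p ∣ α * c := by
      rcases hdvd2 with ⟨k, hk⟩
      refine ⟨k, Nat.eq_of_mul_eq_mul_left hq.pos ?_⟩
      rw [hk]; ring
    rcases (Nat.Prime.dvd_mul hp).mp h3 with h | h
    · exfalso
      have := Nat.le_of_dvd (by omega) h
      rcases hα1 with rfl | rfl <;> omega
    · exact h
  obtain ⟨t, rfl⟩ := hpc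
  exact ⟨t, by rw [hc, pow_mul]⟩

section ColStep
open Polynomial Finset

lemma colstep {p q : ℕ} (hp : p.Prime) (hq : q.Prime)
    {ω : ℂ} (hω : IsPrimitiveRoot ω (p * q)) (b : ℕ → ℕ)
    (hb : ∀ i < p * q, b i ≤ 1)
    (hcol : Polynomial.cyclotomic q (ZMod p) ∣
      (seqPoly (p * q) b).map (Int.castRingHom (ZMod p)))
    (hB2 : Polynomial.aeval (ω ^ p) (seqPoly (p * q) b) ≠ 0) :
    Polynomial.aeval ω (seqPoly (p * q) b) = 0 := by
  haveI : Fact p.Prime := ⟨hp⟩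
  haveI : Fact q.Prime := ⟨hq⟩
  have hnpos : 0 < p * q := Nat.mul_pos hp.pos hq.pos
  set PB : Polynomial ℤ := seqPoly (p * q) b with hPB
  set β : ℕ → ℕ := fun v => ∑ x ∈ (Finset.range (p * q)).filter (fun x => x % q = v), b x with hβ
  set Bcol : Polynomial ℤ := ∑ v ∈ Finset.range q, Polynomial.C ((β v : ℤ)) * Polynomial.X ^ v with hBcolDef
  -- X^q - 1 divides PB - Bcol
  have hterm : ∀ x : ℕ, (Polynomial.X ^ q - 1 : Polynomial ℤ) ∣
      (Polynomial.X ^ x - Polynomial.X ^ (x % q)) := by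
    intro x
    have h1 : (Polynomial.X ^ x - Polynomial.X ^ (x % q) : Polynomial ℤ)
        = ((Polynomial.X ^ q) ^ (x / q) - 1) * Polynomial.X ^ (x % q) := by
      rw [sub_mul, one_mul, ← pow_mul, ← pow_add, Nat.div_add_mod x q]
    rw [h1]
    exact Dvd.dvd.mul_right (by simpa using sub_dvd_pow_sub_pow (Polynomial.X ^ q : Polynomial ℤ) 1 (x / q)) _
  have hBcol2 : Bcol = ∑ x ∈ Finset.range (p * q), Polynomial.C ((b x : ℤ)) * Polynomial.X ^ (x % q) := by
    rw [hBcolDef, ← Finset.sum_fiberwise_of_maps_to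
      (fun x _ => Finset.mem_range.mpr (Nat.mod_lt x hq.pos))
      (fun x => Polynomial.C ((b x : ℤ)) * Polynomial.X ^ (x % q))]
    refine Finset.sum_congr rfl fun v hv => ?_
    rw [Finset.sum_congr rfl (fun x hx => by rw [(Finset.mem_filter.mp hx).2])]
    rw [← Finset.sum_mul, hβ]
    congr 1
    rw [← map_sum Polynomial.C _ _]
    congr 1
    push_cast
    rfl
  have hmodX : (Polynomial.X ^ q - 1 : Polynomial ℤ) ∣ PB - Bcol := by
    rw [hPB, seqPoly, hBcol2, ← Finset.sum_sub_distrib]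
    refine Finset.dvd_sum fun x _ => ?_
    rw [← mul_sub]
    exact Dvd.dvd.mul_left (hterm x) _
  -- pass to ZMod p
  have hcyccol : Polynomial.cyclotomic q (ZMod p) ∣ Bcol.map (Int.castRingHom (ZMod p)) := by
    have h2 : Polynomial.cyclotomic q (ZMod p) ∣ (PB - Bcol).map (Int.castRingHom (ZMod p)) :=
      dvd_trans (by simpa using Polynomial.cyclotomic.dvd_X_pow_sub_one q (ZMod p))
        (Polynomial.map_dvd _ hmodX)
    have h3 := dvd_sub hcol h2
    rwa [Polynomial.map_sub, sub_sub_cancel] at h3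
  -- coefficients of (map Bcol) are all equal
  have hcoeff : ∀ v < q, (Bcol.map (Int.castRingHom (ZMod p))).coeff v = ((β v : ℤ) : ZMod p) := by
    intro v hv
    rw [Polynomial.coeff_map, hBcolDef]
    rw [Polynomial.finset_sum_coeff]
    simp only [Polynomial.coeff_C_mul, Polynomial.coeff_X_pow]
    rw [Finset.sum_eq_single v (fun u _ hu => by simp [Ne.symm hu]) (fun h => absurd (Finset.mem_range.mpr hv) h)]
    simp
  have hkey : ∃ k : ZMod p, ∀ v < q, ((β v : ℤ) : ZMod p) = k := by
    obtain ⟨K, hK⟩ := hcyccol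
    by_cases hK0 : K = 0
    · refine ⟨0, fun v hv => ?_⟩
      have h5 := hcoeff v hv
      rw [hK, hK0, mul_zero, Polynomial.coeff_zero] at h5
      exact h5.symm
    · have hdegB : (Bcol.map (Int.castRingHom (ZMod p))).degree < q := by
        refine lt_of_le_of_lt (Polynomial.degree_map_le) ?_
        rw [hBcolDef]
        refine lt_of_le_of_lt (Polynomial.degree_sum_le _ _) ?_
        rw [Finset.sup_lt_iff (by exact_mod_cast WithBot.bot_lt_coe q)]
        intro v hv
        exact lt_of_le_of_lt (Polynomial.degree_C_mul_X_pow_le _ _)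
          (by exact_mod_cast Finset.mem_range.mp hv)
      have hcycdeg : (Polynomial.cyclotomic q (ZMod p)).natDegree = q - 1 := by
        rw [Polynomial.natDegree_cyclotomic, Nat.totient_prime hq]
      have hBne : Bcol.map (Int.castRingHom (ZMod p)) ≠ 0 := by
        rw [hK]
        exact mul_ne_zero (Polynomial.cyclotomic_ne_zero q (ZMod p)) hK0
      have hdegnat : (Bcol.map (Int.castRingHom (ZMod p))).natDegree < q := by
        rwa [Polynomial.natDegree_lt_iff_degree_lt hBne]
      have hnat := congrArg Polynomial.natDegree hK
      rw [Polynomial.natDegree_mul (Polynomial.cyclotomic_ne_zero q (ZMod p)) hK0, hcycdeg] at hnat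
      have hKdeg : K.natDegree = 0 := by omega
      obtain ⟨k, rfl⟩ : ∃ k, K = Polynomial.C k :=
        ⟨K.coeff 0, Polynomial.eq_C_of_natDegree_eq_zero hKdeg⟩
      refine ⟨k, fun v hv => ?_⟩
      have h5 := hcoeff v hv
      rw [hK, Polynomial.coeff_mul_C] at h5
      have h6 : (Polynomial.cyclotomic q (ZMod p)).coeff v = 1 := by
        rw [Polynomial.cyclotomic_prime, Polynomial.finset_sum_coeff]
        simp only [Polynomial.coeff_X_pow]
        rw [Finset.sum_eq_single v (fun u _ hu => by simp [Ne.symm hu])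
          (fun h => absurd (Finset.mem_range.mpr hv) h)]
        simp
      rw [h6, one_mul] at h5
      exact h5.symm
  obtain ⟨k, hk⟩ := hkey
  -- bounds on β
  have hβle : ∀ v < q, β v ≤ p := by
    intro v hv
    have h1 : β v ≤ ((Finset.range (p * q)).filter (fun x => x % q = v)).card • 1 := by
      rw [hβ]
      exact Finset.sum_le_card_nsmul _ _ 1
        (fun x hx => hb x (Finset.mem_range.mp (Finset.mem_filter.mp hx).1))
    rwa [fiber_card hv, smul_eq_mul, mul_one] at h1
  have hβcongr : ∀ v < q, (p : ℤ) ∣ ((β v : ℤ) - (β 0 : ℤ)) := by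
    intro v hv
    rw [← ZMod.intCast_zmod_eq_zero_iff_dvd, Int.cast_sub, hk v hv, hk 0 hq.pos, sub_self]
  -- evaluation at ζ = ω^p
  have hζ : IsPrimitiveRoot (ω ^ p) q := hω.pow hnpos rfl
  have hζq1 : (ω ^ p) ^ q = 1 := hζ.pow_eq_one
  have hevalcol : Polynomial.aeval (ω ^ p) PB = Polynomial.aeval (ω ^ p) Bcol := by
    obtain ⟨g, hg⟩ := hmodX
    have h0 : Polynomial.aeval (ω ^ p) (PB - Bcol) = 0 := by
      rw [hg, map_mul, map_sub, map_pow, map_one, Polynomial.aeval_X, hζq1, sub_self, zero_mul]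
    rw [map_sub] at h0
    exact sub_eq_zero.mp h0
  by_cases hconst : ∀ v < q, β v = β 0
  · exfalso
    apply hB2
    rw [hevalcol, hBcolDef]
    have : Polynomial.aeval (ω ^ p) (∑ v ∈ Finset.range q, Polynomial.C ((β v : ℤ)) * Polynomial.X ^ v)
        = ∑ v ∈ Finset.range q, ((β v : ℂ)) * (ω ^ p) ^ v := by
      simp
    rw [this, Finset.sum_congr rfl (fun v hv => by
      rw [hconst v (Finset.mem_range.mp hv)])]
    rw [← Finset.mul_sum, hζ.geom_sum_eq_zero hq.one_lt, mul_zero]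
  · push_neg at hconst
    obtain ⟨v₀, hv₀q, hv₀ne⟩ := hconst
    have hβ0 : β 0 = 0 ∨ β 0 = p := by
      have hd := hβcongr v₀ hv₀q
      have h1 : β v₀ ≤ p := hβle v₀ hv₀q
      have h2 : β 0 ≤ p := hβle 0 hq.pos
      have hdne : ((β v₀ : ℤ) - (β 0 : ℤ)) ≠ 0 := by
        intro h; apply hv₀ne; omega
      have hple : (p : ℤ) ≤ |(β v₀ : ℤ) - (β 0 : ℤ)| :=
        Int.le_of_dvd (abs_pos.mpr hdne) ((dvd_abs _ _).mpr hd)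
      rcases abs_cases ((β v₀ : ℤ) - (β 0 : ℤ)) with ⟨habs, _⟩ | ⟨habs, _⟩ <;>
        rw [habs] at hple <;> omega
    have hβ0p : (p : ℤ) ∣ (β 0 : ℤ) := by
      rcases hβ0 with h | h <;> rw [h] <;> simp
    have hall : ∀ v < q, β v = 0 ∨ β v = p := by
      intro v hv
      have hd : (p : ℤ) ∣ (β v : ℤ) := by
        have := dvd_add (hβcongr v hv) hβ0p
        simpa using this
      have hdn : p ∣ β v := Int.natCast_dvd_natCast.mp (by exact_mod_cast hd)
      rcases Nat.eq_zero_or_pos (β v) with h | h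
      · exact Or.inl h
      · exact Or.inr (le_antisymm (hβle v hv) (Nat.le_of_dvd h hdn))
    -- final computation: aeval ω PB = 0
    have hPBeval : Polynomial.aeval ω PB = ∑ x ∈ Finset.range (p * q), (b x : ℂ) * ω ^ x := by
      rw [hPB]; exact aeval_seqPoly _ _ _
    rw [hPBeval]
    rw [← Finset.sum_fiberwise_of_maps_to
      (fun x _ => Finset.mem_range.mpr (Nat.mod_lt x hq.pos))
      (fun x => (b x : ℂ) * ω ^ x)]
    refine Finset.sum_eq_zero fun v hv => ?_
    have hvq := Finset.mem_range.mp hv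
    rcases hall v hvq with h0 | h1
    · refine Finset.sum_eq_zero fun x hx => ?_
      have hbx : b x = 0 := by
        have := (Finset.sum_eq_zero_iff.mp h0) x hx
        exact this
      rw [hbx, Nat.cast_zero, zero_mul]
    · -- all entries equal 1
      have hone : ∀ x ∈ (Finset.range (p * q)).filter (fun x => x % q = v), b x = 1 := by
        intro x hx
        by_contra hbx
        have hbx0 : b x = 0 := by
          have := hb x (Finset.mem_range.mp (Finset.mem_filter.mp hx).1)
          omega
        have hsum : β v = ∑ y ∈ ((Finset.range (p * q)).filter (fun x => x % q = v)).erase x, b y := by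
          show (∑ y ∈ (Finset.range (p * q)).filter (fun x => x % q = v), b y) = _
          rw [← Finset.add_sum_erase _ _ hx, hbx0, zero_add]
        have hle2 : β v ≤ (((Finset.range (p * q)).filter (fun x => x % q = v)).erase x).card • 1 := by
          rw [hsum]
          refine Finset.sum_le_card_nsmul _ _ 1 (fun y hy => ?_)
          exact hb y (Finset.mem_range.mp
            (Finset.mem_filter.mp (Finset.mem_of_mem_erase hy)).1)
        rw [Finset.card_erase_of_mem hx, fiber_card hvq, smul_eq_mul, mul_one] at hle2
        have hppos := hp.pos
        omega
      have hsum1 : ∑ x ∈ (Finset.range (p * q)).filter (fun x => x % q = v), (b x : ℂ) * ω ^ x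
          = ∑ x ∈ (Finset.range (p * q)).filter (fun x => x % q = v), ω ^ x := by
        refine Finset.sum_congr rfl fun x hx => ?_
        rw [hone x hx, Nat.cast_one, one_mul]
      rw [hsum1, fiber_eq hvq]
      rw [Finset.sum_image (fun s hs t ht hst => Nat.eq_of_mul_eq_mul_left hq.pos (by omega))]
      have hζp : IsPrimitiveRoot (ω ^ q) p := hω.pow hnpos (mul_comm p q)
      have : ∑ t ∈ Finset.range p, ω ^ (v + q * t)
          = ω ^ v * ∑ t ∈ Finset.range p, (ω ^ q) ^ t := by
        rw [Finset.mul_sum]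
        refine Finset.sum_congr rfl fun t _ => ?_
        rw [pow_add, pow_mul]
      rw [this, hζp.geom_sum_eq_zero hp.one_lt, mul_zero]

end ColStep

section Crux
open Polynomial Finset

lemma crux {p q : ℕ} (hp : p.Prime) (hq : q.Prime) (hne : p ≠ q)
    {ω : ℂ} (hω : IsPrimitiveRoot ω (p * q)) (b : ℕ → ℕ)
    (hb : ∀ i < p * q, b i ≤ 1) (PA : Polynomial ℤ) (m s : ℕ)
    (hB1 : Polynomial.aeval ω (seqPoly (p * q) b) ≠ 0)
    (hB2 : Polynomial.aeval (ω ^ p) (seqPoly (p * q) b) ≠ 0)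
    (hdvd : Polynomial.cyclotomic (p * q) ℤ ∣ (PA - Polynomial.X ^ m * seqPoly (p * q) b))
    (hs : Polynomial.aeval (ω ^ p) PA
      = (ω ^ p) ^ s * Polynomial.aeval (ω ^ p) (seqPoly (p * q) b)) :
    (ω ^ p) ^ m = (ω ^ p) ^ s := by
  haveI : Fact p.Prime := ⟨hp⟩
  haveI : Fact q.Prime := ⟨hq⟩
  haveI : NeZero p := ⟨hp.pos.ne'⟩
  by_contra hms
  set PB : Polynomial ℤ := seqPoly (p * q) b with hPBdef
  have hnpos : 0 < p * q := Nat.mul_pos hp.pos hq.pos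
  have hζ : IsPrimitiveRoot (ω ^ p) q := hω.pow hnpos rfl
  have hζq1 : (ω ^ p) ^ q = 1 := hζ.pow_eq_one
  have hpq : ¬ p ∣ q := fun hd => hne ((Nat.prime_dvd_prime_iff_eq hp hq).mp hd)
  have hqZ : ((q : ZMod p)) ≠ 0 := fun h0 =>
    hpq ((ZMod.natCast_eq_zero_iff q p).mp h0)
  -- the exponent e
  set e : ℕ := (s + (q - m % q)) % q with hedef
  have hmq : m % q < q := Nat.mod_lt _ hq.pos
  have hme : (ω ^ p) ^ (m + e) = (ω ^ p) ^ s := by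
    rw [pow_eq_pow_mod (m + e) hζq1, pow_eq_pow_mod s hζq1]
    congr 1
    have hmodeq : (m + (s + (q - m % q))) % q = s % q := by
      have h1 : m + (s + (q - m % q)) = s + (q * (m / q) + q) := by
        have := Nat.div_add_mod m q
        omega
      have h2 : q * (m / q) + q = q * (m / q + 1) := by ring
      rw [h1, h2, Nat.add_mul_mod_self_left]
    calc (m + e) % q = (m + (s + (q - m % q))) % q := by rw [hedef, Nat.add_mod_mod]
      _ = s % q := hmodeq
  have he0 : e ≠ 0 := fun h0 => hms (by rw [← hme, h0, add_zero])
  have helt : e < q := by rw [hedef]; exact Nat.mod_lt _ hq.pos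
  have hζe : IsPrimitiveRoot ((ω ^ p) ^ e) q :=
    hζ.pow_of_coprime e (Nat.coprime_comm.mp ((hq.coprime_iff_not_dvd).mpr
      (Nat.not_dvd_of_pos_of_lt (Nat.pos_of_ne_zero he0) helt)))
  obtain ⟨H, hH⟩ := hdvd
  -- q = (1 - ζ^e) * W
  have h1mem : (1 : ℕ) ∈ Finset.Ico 1 q := Finset.mem_Ico.mpr ⟨le_refl 1, hq.one_lt⟩
  set Wset : Finset ℕ := (Finset.Ico 1 q).erase 1 with hWset
  have hqprod : (q : ℂ) = (1 - (ω ^ p) ^ e) * ∏ i ∈ Wset, (1 - ((ω ^ p) ^ e) ^ i) := by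
    rw [← prod_one_sub hq hζe, ← Finset.mul_prod_erase _ _ h1mem, pow_one]
  -- p = Φn(ζ) * Φp(ζ)
  have hqp : ¬ q ∣ p := fun hd => hne ((Nat.prime_dvd_prime_iff_eq hq hp).mp hd).symm
  have hpid : Polynomial.aeval (ω ^ p) (Polynomial.cyclotomic (p * q) ℤ)
      * Polynomial.aeval (ω ^ p) (Polynomial.cyclotomic p ℤ) = (p : ℂ) := by
    have h2 := congrArg (Polynomial.aeval (ω ^ p))
      (Polynomial.cyclotomic_expand_eq_cyclotomic_mul hq hqp ℤ)
    rw [Polynomial.expand_aeval, map_mul, hζq1] at h2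
    rw [← h2, Polynomial.aeval_def, Polynomial.eval₂_at_one,
      Polynomial.eval_one_cyclotomic_prime]
    simp
  -- the big integer polynomial F
  set Wpoly : Polynomial ℤ := ∏ i ∈ Wset, (1 - Polynomial.X ^ (p * (e * i))) with hWpoly
  set F : Polynomial ℤ := Polynomial.C (q : ℤ) * Polynomial.X ^ (p * m)
      * ((Polynomial.cyclotomic p ℤ).comp (Polynomial.X ^ p)) * (PB.comp (Polynomial.X ^ p))
      + Polynomial.C (p : ℤ) * Wpoly * (H.comp (Polynomial.X ^ p)) with hF
  have hcomp : ∀ f : Polynomial ℤ,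
      Polynomial.aeval ω (f.comp (Polynomial.X ^ p)) = Polynomial.aeval (ω ^ p) f := by
    intro f
    rw [Polynomial.aeval_comp, map_pow, Polynomial.aeval_X]
  have hWeval : Polynomial.aeval ω Wpoly = ∏ i ∈ Wset, (1 - ((ω ^ p) ^ e) ^ i) := by
    rw [hWpoly, map_prod]
    refine Finset.prod_congr rfl fun i _ => ?_
    rw [map_sub, map_one, Polynomial.aeval_X_pow, ← pow_mul, ← pow_mul]
  have hE1 : Polynomial.aeval (ω ^ p) PA - (ω ^ p) ^ m * Polynomial.aeval (ω ^ p) PB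
      = Polynomial.aeval (ω ^ p) (Polynomial.cyclotomic (p * q) ℤ)
        * Polynomial.aeval (ω ^ p) H := by
    have h3 := congrArg (Polynomial.aeval (ω ^ p)) hH
    rw [map_sub, map_mul, map_mul, map_pow, Polynomial.aeval_X] at h3
    exact h3
  have hse : (ω ^ p) ^ s = (ω ^ p) ^ m * (ω ^ p) ^ e := by
    rw [← pow_add]; exact hme.symm
  have hE2 : (ω ^ p) ^ m * ((ω ^ p) ^ e - 1) * Polynomial.aeval (ω ^ p) PB
      = Polynomial.aeval (ω ^ p) (Polynomial.cyclotomic (p * q) ℤ)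
        * Polynomial.aeval (ω ^ p) H := by
    linear_combination hE1 - hs - (Polynomial.aeval (ω ^ p) PB) * hse
  have hFeval : Polynomial.aeval ω F = 0 := by
    simp only [hF, map_add, map_mul, hcomp, hWeval, Polynomial.aeval_C,
      Polynomial.aeval_X_pow]
    have hωpm : (ω : ℂ) ^ (p * m) = (ω ^ p) ^ m := by rw [pow_mul]
    rw [hωpm]
    have hq' : (algebraMap ℤ ℂ) ((q : ℤ)) = (q : ℂ) := by push_cast; simp
    have hp' : (algebraMap ℤ ℂ) ((p : ℤ)) = (p : ℂ) := by push_cast; simp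
    rw [hq', hp']
    linear_combination ((ω ^ p) ^ m * (Polynomial.aeval (ω ^ p) (Polynomial.cyclotomic p ℤ))
        * (Polynomial.aeval (ω ^ p) PB)) * hqprod
      - ((∏ i ∈ Wset, (1 - ((ω ^ p) ^ e) ^ i))
        * (Polynomial.aeval (ω ^ p) (Polynomial.cyclotomic p ℤ))) * hE2
      - ((∏ i ∈ Wset, (1 - ((ω ^ p) ^ e) ^ i)) * (Polynomial.aeval (ω ^ p) H)) * hpid
  have hFdvd : Polynomial.cyclotomic (p * q) ℤ ∣ F := root_dvd hnpos hω hFeval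
  obtain ⟨K, hK⟩ := hFdvd
  have hmap := congrArg (Polynomial.map (Int.castRingHom (ZMod p))) hK
  rw [Polynomial.map_mul, Polynomial.map_cyclotomic] at hmap
  set B' : Polynomial (ZMod p) := PB.map (Int.castRingHom (ZMod p)) with hB'
  have hmapF : F.map (Int.castRingHom (ZMod p)) =
      Polynomial.C (((q : ℤ) : ZMod p)) * Polynomial.X ^ (p * m)
        * ((Polynomial.cyclotomic p (ZMod p)).comp (Polynomial.X ^ p))
        * (B'.comp (Polynomial.X ^ p)) := by
    rw [hF]
    simp only [Polynomial.map_add, Polynomial.map_mul, Polynomial.map_pow, Polynomial.map_X,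
      Polynomial.map_C, Polynomial.map_comp, Polynomial.map_cyclotomic, Int.coe_castRingHom]
    have hp0 : ((p : ℤ) : ZMod p) = 0 := by
      push_cast
      exact ZMod.natCast_self p
    rw [hp0, Polynomial.C_0, zero_mul, zero_mul, add_zero]
  rw [hmapF] at hmap
  -- cyclotomic identities mod p
  have hXp : ((Polynomial.X - 1 : Polynomial (ZMod p))) ^ p = Polynomial.X ^ p - 1 := by
    rw [sub_pow_char]
    simp
  have hX1ne : (Polynomial.X - 1 : Polynomial (ZMod p)) ≠ 0 := by
    have h5 : (Polynomial.X - 1 : Polynomial (ZMod p)) = Polynomial.X - Polynomial.C 1 := by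
      rw [Polynomial.C_1]
    rw [h5]
    exact Polynomial.X_sub_C_ne_zero 1
  have hΦp : Polynomial.cyclotomic p (ZMod p) = (Polynomial.X - 1) ^ (p - 1) := by
    apply mul_right_cancel₀ hX1ne
    rw [Polynomial.cyclotomic_prime_mul_X_sub_one, ← hXp, ← pow_succ]
    congr 1
    have := hp.two_le
    omega
  have hΦnZ : Polynomial.cyclotomic (p * q) (ZMod p)
      = (Polynomial.cyclotomic q (ZMod p)) ^ (p - 1) := by
    have h4 := Polynomial.cyclotomic_expand_eq_cyclotomic_mul hp hpq (ZMod p)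
    have h6 : Polynomial.expand (ZMod p) p (Polynomial.cyclotomic q (ZMod p))
        = (Polynomial.cyclotomic q (ZMod p)) ^ p := by
      exact ZMod.expand_card (Polynomial.cyclotomic q (ZMod p))
    rw [h6] at h4
    rw [mul_comm p q]
    apply mul_right_cancel₀ (Polynomial.cyclotomic_ne_zero q (ZMod p))
    rw [← h4, ← pow_succ]
    congr 1
    have := hp.two_le
    omega
  have hcompΦp : ((Polynomial.cyclotomic p (ZMod p)).comp (Polynomial.X ^ p))
      = (Polynomial.X - 1) ^ (p * (p - 1)) := by
    rw [hΦp, Polynomial.pow_comp, Polynomial.sub_comp, Polynomial.X_comp, Polynomial.one_comp,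
      ← hXp, ← pow_mul]
  have hcompPB : (B'.comp (Polynomial.X ^ p)) = B' ^ p := by
    rw [← Polynomial.expand_eq_comp_X_pow]
    exact ZMod.expand_card B'
  rw [hΦnZ, hcompΦp, hcompPB] at hmap
  -- now: C q * X^(p*m) * (X-1)^(p*(p-1)) * B'^p = (cyc q)^(p-1) * K'
  set u : ZMod p := ((q : ℤ) : ZMod p) with hu
  have hune : u ≠ 0 := by
    rw [hu]
    push_cast
    exact hqZ
  have hcancel : (Polynomial.C u⁻¹ * Polynomial.C u : Polynomial (ZMod p)) = 1 := by
    rw [← Polynomial.C_mul, inv_mul_cancel₀ hune, Polynomial.C_1]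
  have hdvd1 : (Polynomial.cyclotomic q (ZMod p)) ^ (p - 1) ∣
      (Polynomial.X ^ (p * m) * (Polynomial.X - 1) ^ (p * (p - 1))) * B' ^ p := by
    refine ⟨Polynomial.C u⁻¹ * (K.map (Int.castRingHom (ZMod p))), ?_⟩
    calc (Polynomial.X ^ (p * m) * (Polynomial.X - 1) ^ (p * (p - 1))) * B' ^ p
        = Polynomial.C u⁻¹ * Polynomial.C u
          * ((Polynomial.X ^ (p * m) * (Polynomial.X - 1) ^ (p * (p - 1))) * B' ^ p) := by
          rw [hcancel, one_mul]
      _ = Polynomial.C u⁻¹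
          * (Polynomial.C u * Polynomial.X ^ (p * m) * (Polynomial.X - 1) ^ (p * (p - 1))
            * B' ^ p) := by ring
      _ = Polynomial.C u⁻¹ * ((Polynomial.cyclotomic q (ZMod p)) ^ (p - 1)
            * (K.map (Int.castRingHom (ZMod p)))) := by rw [hmap]
      _ = (Polynomial.cyclotomic q (ZMod p)) ^ (p - 1)
            * (Polynomial.C u⁻¹ * (K.map (Int.castRingHom (ZMod p)))) := by ring
  have hXcop : IsCoprime (Polynomial.X : Polynomial (ZMod p)) (Polynomial.cyclotomic q (ZMod p)) :=
    (Polynomial.irreducible_X.coprime_iff_not_dvd).mpr (by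
      rw [Polynomial.X_dvd_iff, Polynomial.cyclotomic_coeff_zero _ hq.one_lt]
      exact one_ne_zero)
  have hX1cop : IsCoprime (Polynomial.X - 1 : Polynomial (ZMod p))
      (Polynomial.cyclotomic q (ZMod p)) := by
    have hirr : Irreducible (Polynomial.X - 1 : Polynomial (ZMod p)) := by
      have h5 : (Polynomial.X - 1 : Polynomial (ZMod p)) = Polynomial.X - Polynomial.C 1 := by
        rw [Polynomial.C_1]
      rw [h5]
      exact Polynomial.irreducible_X_sub_C 1
    refine (hirr.coprime_iff_not_dvd).mpr ?_
    intro hdvd'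
    have h8 : (Polynomial.cyclotomic q (ZMod p)).IsRoot 1 := by
      rw [← Polynomial.dvd_iff_isRoot]
      simpa using hdvd'
    rw [Polynomial.IsRoot.def, Polynomial.eval_one_cyclotomic_prime] at h8
    exact hqZ h8
  have hcop2 : IsCoprime (Polynomial.X ^ (p * m) * (Polynomial.X - 1) ^ (p * (p - 1)))
      ((Polynomial.cyclotomic q (ZMod p)) ^ (p - 1)) :=
    ((hXcop.pow_left).mul_left (hX1cop.pow_left)).pow_right
  have hdvd2 : (Polynomial.cyclotomic q (ZMod p)) ^ (p - 1) ∣ B' ^ p :=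
    (hcop2.symm).dvd_of_dvd_mul_left hdvd1
  have hdvd4 : Polynomial.cyclotomic q (ZMod p) ∣ B' ^ p :=
    dvd_trans (dvd_pow_self _ (by have := hp.two_le; omega)) hdvd2
  have hsf : Squarefree (Polynomial.cyclotomic q (ZMod p)) := by
    apply Squarefree.squarefree_of_dvd (Polynomial.cyclotomic.dvd_X_pow_sub_one q (ZMod p))
    exact (Polynomial.X_pow_sub_one_separable_iff.mpr hqZ).squarefree
  have hdvd5 : Polynomial.cyclotomic q (ZMod p) ∣ B' :=
    (hsf.dvd_pow_iff_dvd hp.pos.ne').mp hdvd4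
  exact hB1 (colstep hp hq hω b hb hdvd5 hB2)

end Crux

section Assembly
open Polynomial Finset

lemma divisor_four {p q d : ℕ} (hp : p.Prime) (hq : q.Prime) (hne : p ≠ q) (hd : d ∣ p * q) :
    d = 1 ∨ d = p ∨ d = q ∨ d = p * q := by
  have hcop : Nat.Coprime p q := (Nat.coprime_primes hp hq).mpr hne
  by_cases hpd : p ∣ d <;> by_cases hqd : q ∣ d
  · exact Or.inr (Or.inr (Or.inr
      (Nat.dvd_antisymm hd (Nat.Coprime.mul_dvd_of_dvd_of_dvd hcop hpd hqd))))
  · refine Or.inr (Or.inl ?_)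
    have hdq : Nat.Coprime d q := Nat.coprime_comm.mp ((hq.coprime_iff_not_dvd).mpr hqd)
    exact Nat.dvd_antisymm (Nat.Coprime.dvd_of_dvd_mul_right hdq hd) hpd
  · refine Or.inr (Or.inr (Or.inl ?_))
    have hdp : Nat.Coprime d p := Nat.coprime_comm.mp ((hp.coprime_iff_not_dvd).mpr hpd)
    exact Nat.dvd_antisymm (Nat.Coprime.dvd_of_dvd_mul_left hdp hd) hqd
  · refine Or.inl ?_
    have hdp : Nat.Coprime d p := Nat.coprime_comm.mp ((hp.coprime_iff_not_dvd).mpr hpd)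
    have hdq : Nat.Coprime d q := Nat.coprime_comm.mp ((hq.coprime_iff_not_dvd).mpr hqd)
    exact hdp.eq_one_of_dvd (Nat.Coprime.dvd_of_dvd_mul_right hdq hd)

lemma prim_pow_gcd {n k : ℕ} (hn : 0 < n) {ω : ℂ} (hω : IsPrimitiveRoot ω n) :
    IsPrimitiveRoot (ω ^ k) (n / Nat.gcd k n) := by
  have hg : Nat.gcd k n ∣ n := Nat.gcd_dvd_right k n
  have hgpos : 0 < Nat.gcd k n := Nat.gcd_pos_of_pos_right k hn
  have h1 : IsPrimitiveRoot (ω ^ (Nat.gcd k n)) (n / Nat.gcd k n) :=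
    hω.pow hn (Nat.mul_div_cancel' hg).symm
  have h2 : ω ^ k = (ω ^ (Nat.gcd k n)) ^ (k / Nat.gcd k n) := by
    rw [← pow_mul, Nat.mul_div_cancel' (Nat.gcd_dvd_left k n)]
  rw [h2]
  exact h1.pow_of_coprime _ (Nat.coprime_div_gcd_div_gcd hgpos)

lemma inv_sum {n : ℕ} (hn : 0 < n) {ω : ℂ} (hω : IsPrimitiveRoot ω n) (u : ℕ → ℕ)
    {l : ℕ} (hl : l < n) :
    ∑ k ∈ Finset.range n, (∑ i ∈ Finset.range n, (u i : ℂ) * (ω ^ k) ^ i) * ((ω ^ l) ^ k)⁻¹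
      = (n : ℂ) * (u l) := by
  have hw0 : ω ≠ 0 := hω.ne_zero hn.ne'
  have hstep : ∀ i ∈ Finset.range n,
      (u i : ℂ) * ∑ k ∈ Finset.range n, (ω ^ i * (ω ^ l)⁻¹) ^ k
        = if i = l then (n : ℂ) * u i else 0 := by
    intro i hi
    by_cases hil : i = l
    · subst hil
      rw [if_pos rfl, mul_inv_cancel₀ (pow_ne_zero _ hw0)]
      simp only [one_pow, Finset.sum_const, Finset.card_range, nsmul_eq_mul, mul_one]
      ring
    · rw [if_neg hil]
      have hzne : ω ^ i * (ω ^ l)⁻¹ ≠ 1 := fun h1 =>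
        hil (hω.pow_inj (Finset.mem_range.mp hi) hl
          ((mul_inv_eq_one₀ (pow_ne_zero _ hw0)).mp h1))
      have hin : (ω ^ i) ^ n = 1 := by
        rw [← pow_mul, mul_comm, pow_mul, hω.pow_eq_one, one_pow]
      have hln : (ω ^ l) ^ n = 1 := by
        rw [← pow_mul, mul_comm, pow_mul, hω.pow_eq_one, one_pow]
      have hzn : (ω ^ i * (ω ^ l)⁻¹) ^ n = 1 := by
        rw [mul_pow, inv_pow, hin, hln, inv_one, mul_one]
      rw [geom_sum_eq hzne, hzn, sub_self, zero_div, mul_zero]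
  calc ∑ k ∈ Finset.range n, (∑ i ∈ Finset.range n, (u i : ℂ) * (ω ^ k) ^ i) * ((ω ^ l) ^ k)⁻¹
      = ∑ k ∈ Finset.range n, ∑ i ∈ Finset.range n,
          (u i : ℂ) * (ω ^ i * (ω ^ l)⁻¹) ^ k := by
        refine Finset.sum_congr rfl fun k _ => ?_
        rw [Finset.sum_mul]
        refine Finset.sum_congr rfl fun i _ => ?_
        rw [mul_pow, inv_pow, pow_right_comm, mul_assoc]
    _ = ∑ i ∈ Finset.range n, ∑ k ∈ Finset.range n,
          (u i : ℂ) * (ω ^ i * (ω ^ l)⁻¹) ^ k := Finset.sum_comm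
    _ = ∑ i ∈ Finset.range n, if i = l then (n : ℂ) * u i else 0 := by
        refine Finset.sum_congr rfl fun i hi => ?_
        rw [← Finset.mul_sum]
        exact hstep i hi
    _ = (n : ℂ) * u l := by
        rw [Finset.sum_ite_eq' (Finset.range n) l (fun i => (n : ℂ) * u i),
          if_pos (Finset.mem_range.mpr hl)]

end Assembly

theorem stmt_3 (p q n : ℕ) (hp : p.Prime) (hq : q.Prime)
    (hop : Odd p) (hoq : Odd q) (hne : p ≠ q) (hn : n = p * q)
    (a b : ℕ → ℕ)
    (ha : ∀ i < n, a i = 0 ∨ a i = 1) (hb : ∀ i < n, b i = 0 ∨ b i = 1)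
    (h : ∀ k < n, ∃ c : ℤ, expSum n a k = primRoot n ^ c * expSum n b k) :
    ∃ j : ℕ, ∀ i < n, b i = a ((i + j) % n) := by
  subst hn
  have hnpos : 0 < p * q := Nat.mul_pos hp.pos hq.pos
  have hω : IsPrimitiveRoot (primRoot (p * q)) (p * q) := primRoot_isPrimitive hnpos
  set ω : ℂ := primRoot (p * q) with hωdef
  have hw0 : ω ≠ 0 := hω.ne_zero hnpos.ne'
  set PA : Polynomial ℤ := seqPoly (p * q) a with hPA
  set PB : Polynomial ℤ := seqPoly (p * q) b with hPB
  have hb' : ∀ i < p * q, b i ≤ 1 := fun i hi => by rcases hb i hi with h0 | h0 <;> omega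
  have h1lt : 1 < p * q := by
    have := hp.two_le; have := hq.two_le; nlinarith
  have hplt : p < p * q := lt_mul_iff_one_lt_right hp.pos |>.mpr hq.one_lt
  have hqlt : q < p * q := by
    have := hp.one_lt
    calc q = 1 * q := (one_mul q).symm
      _ < p * q := (Nat.mul_lt_mul_right hq.pos).mpr hp.one_lt
  have h' : ∀ k, k < p * q →
      ∃ c : ℕ, Polynomial.aeval (ω ^ k) PA = ω ^ c * Polynomial.aeval (ω ^ k) PB := by
    intro k hk
    obtain ⟨c, hc⟩ := h k hk
    obtain ⟨t, ht⟩ := zpow_norm hnpos hω c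
    rw [expSum_eq_aeval, expSum_eq_aeval, ← hωdef] at hc
    exact ⟨t, by rw [← ht]; exact hc⟩
  -- k = 0 : equal coefficient sums
  have habs1 : ‖ω‖ = 1 := by
    have h2 : ‖ω‖ ^ (p * q) = 1 := by
      rw [← norm_pow, hω.pow_eq_one, norm_one]
    rcases lt_trichotomy ‖ω‖ 1 with hlt | heq | hgt
    · exfalso
      have h3 : ‖ω‖ ^ (p * q) < 1 :=
        pow_lt_one₀ (norm_nonneg ω) hlt hnpos.ne'
      linarith
    · exact heq
    · exfalso
      have h3 : 1 < ‖ω‖ ^ (p * q) := one_lt_pow₀ hgt hnpos.ne'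
      linarith
  have hsum_eq : Polynomial.aeval (1 : ℂ) PA = Polynomial.aeval (1 : ℂ) PB := by
    obtain ⟨c, hc⟩ := h 0 hnpos
    rw [expSum, expSum] at hc
    simp only [mul_zero, pow_zero, mul_one] at hc
    push_cast at hc
    rw [← Nat.cast_sum, ← Nat.cast_sum] at hc
    have habs := congrArg (‖·‖) hc
    rw [norm_mul, norm_zpow, habs1, one_zpow, one_mul, Complex.norm_natCast,
      Complex.norm_natCast] at habs
    have hnat : (∑ i ∈ Finset.range (p * q), a i) = (∑ i ∈ Finset.range (p * q), b i) := by
      exact_mod_cast habs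
    rw [hPA, hPB, aeval_seqPoly, aeval_seqPoly]
    simp only [one_pow, mul_one]
    rw [← Nat.cast_sum, ← Nat.cast_sum]
    exact_mod_cast hnat
  have hdvd1 : ∀ j : ℕ, Polynomial.cyclotomic 1 ℤ ∣ (PA - Polynomial.X ^ j * PB) := by
    intro j
    refine root_dvd one_pos IsPrimitiveRoot.one ?_
    rw [map_sub, map_mul, map_pow, Polynomial.aeval_X, one_pow, one_mul, hsum_eq, sub_self]
  have hζq : IsPrimitiveRoot (ω ^ p) q := hω.pow hnpos rfl
  have hζp : IsPrimitiveRoot (ω ^ q) p := hω.pow hnpos (mul_comm p q)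
  have hqp_eq : q * p = p * q := mul_comm q p
  -- obtain exponent j with all four divisibilities
  obtain ⟨j, hjp, hjq, hjn⟩ : ∃ j : ℕ,
      (Polynomial.cyclotomic p ℤ ∣ (PA - Polynomial.X ^ j * PB))
      ∧ (Polynomial.cyclotomic q ℤ ∣ (PA - Polynomial.X ^ j * PB))
      ∧ (Polynomial.cyclotomic (p * q) ℤ ∣ (PA - Polynomial.X ^ j * PB)) := by
    by_cases hBω : Polynomial.aeval ω PB = 0
    · -- degenerate branch
      have hAω : Polynomial.aeval ω PA = 0 := by
        obtain ⟨c, hc⟩ := h' 1 h1lt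
        rw [pow_one] at hc
        rw [hc, hBω, mul_zero]
      have hΦn : ∀ j : ℕ, Polynomial.cyclotomic (p * q) ℤ ∣ (PA - Polynomial.X ^ j * PB) :=
        fun j => dvd_sub (root_dvd hnpos hω hAω) (Dvd.dvd.mul_left (root_dvd hnpos hω hBω) _)
      -- Φq exponent
      obtain ⟨tq, htq⟩ : ∃ t : ℕ, Polynomial.cyclotomic q ℤ ∣ (PA - Polynomial.X ^ t * PB) := by
        obtain ⟨c, hc⟩ := h' p hplt
        by_cases hBq : Polynomial.aeval (ω ^ p) PB = 0
        · have hAq : Polynomial.aeval (ω ^ p) PA = 0 := by rw [hc, hBq, mul_zero]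
          exact ⟨0, dvd_sub (root_dvd hq.pos hζq hAq)
            (Dvd.dvd.mul_left (root_dvd hq.pos hζq hBq) _)⟩
        · obtain ⟨t, ht⟩ := phase_lemma hp hq hop hne hω PA PB c hBq hc
          refine ⟨t, root_dvd hq.pos hζq ?_⟩
          rw [map_sub, map_mul, map_pow, Polynomial.aeval_X, ht, sub_self]
      -- Φp exponent
      obtain ⟨tp, htp⟩ : ∃ t : ℕ, Polynomial.cyclotomic p ℤ ∣ (PA - Polynomial.X ^ t * PB) := by
        obtain ⟨c, hc⟩ := h' q hqlt
        by_cases hBp : Polynomial.aeval (ω ^ q) PB = 0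
        · have hAp : Polynomial.aeval (ω ^ q) PA = 0 := by rw [hc, hBp, mul_zero]
          exact ⟨0, dvd_sub (root_dvd hp.pos hζp hAp)
            (Dvd.dvd.mul_left (root_dvd hp.pos hζp hBp) _)⟩
        · have hω' : IsPrimitiveRoot ω (q * p) := by rw [hqp_eq]; exact hω
          obtain ⟨t, ht⟩ := phase_lemma hq hp hoq hne.symm hω' PA PB c hBp hc
          refine ⟨t, root_dvd hp.pos hζp ?_⟩
          rw [map_sub, map_mul, map_pow, Polynomial.aeval_X, ht, sub_self]
      -- CRT
      have hcop : Nat.Coprime p q := (Nat.coprime_primes hp hq).mpr hne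
      obtain ⟨j, hj1, hj2⟩ := Nat.chineseRemainder hcop tp tq
      have hshift : ∀ (d t : ℕ), 0 < d → j % d = t % d →
          (∀ η : ℂ, IsPrimitiveRoot η d →
          Polynomial.cyclotomic d ℤ ∣ (PA - Polynomial.X ^ t * PB) →
          Polynomial.cyclotomic d ℤ ∣ (PA - Polynomial.X ^ j * PB)) := by
        intro d t hd hmod η hη hdt
        have hXd : Polynomial.cyclotomic d ℤ ∣ ((Polynomial.X ^ j - Polynomial.X ^ t) * PB) := by
          refine Dvd.dvd.mul_right (root_dvd hd hη ?_) _
          rw [map_sub, map_pow, map_pow, Polynomial.aeval_X]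
          rw [pow_eq_pow_mod j hη.pow_eq_one, pow_eq_pow_mod t hη.pow_eq_one, hmod, sub_self]
        have hring : PA - Polynomial.X ^ j * PB
            = (PA - Polynomial.X ^ t * PB) - (Polynomial.X ^ j - Polynomial.X ^ t) * PB := by
          ring
        rw [hring]
        exact dvd_sub hdt hXd
      exact ⟨j, hshift p tp hp.pos hj1 (ω ^ q) hζp htp,
        hshift q tq hq.pos hj2 (ω ^ p) hζq htq, hΦn j⟩
    · -- main branch : aeval ω PB ≠ 0
      obtain ⟨m, hm⟩ := h' 1 h1lt
      rw [pow_one] at hm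
      have hΦn : Polynomial.cyclotomic (p * q) ℤ ∣ (PA - Polynomial.X ^ m * PB) := by
        refine root_dvd hnpos hω ?_
        rw [map_sub, map_mul, map_pow, Polynomial.aeval_X, hm, sub_self]
      refine ⟨m, ?_, ?_, hΦn⟩
      · -- Φp
        obtain ⟨c, hc⟩ := h' q hqlt
        by_cases hBp : Polynomial.aeval (ω ^ q) PB = 0
        · have hAp : Polynomial.aeval (ω ^ q) PA = 0 := by rw [hc, hBp, mul_zero]
          exact dvd_sub (root_dvd hp.pos hζp hAp)
            (Dvd.dvd.mul_left (root_dvd hp.pos hζp hBp) _)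
        · have hω' : IsPrimitiveRoot ω (q * p) := by rw [hqp_eq]; exact hω
          obtain ⟨s, hs⟩ := phase_lemma hq hp hoq hne.symm hω' PA PB c hBp hc
          have hcrux : (ω ^ q) ^ m = (ω ^ q) ^ s := by
            refine crux hq hp hne.symm hω' b ?_ PA m s ?_ ?_ ?_ ?_
            · rw [hqp_eq]; exact hb'
            · rw [hqp_eq]; exact hBω
            · rw [hqp_eq]; exact hBp
            · rw [hqp_eq]; exact hΦn
            · rw [hqp_eq]; exact hs
          refine root_dvd hp.pos hζp ?_
          rw [map_sub, map_mul, map_pow, Polynomial.aeval_X, hs, hcrux, sub_self]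
      · -- Φq
        obtain ⟨c, hc⟩ := h' p hplt
        by_cases hBq : Polynomial.aeval (ω ^ p) PB = 0
        · have hAq : Polynomial.aeval (ω ^ p) PA = 0 := by rw [hc, hBq, mul_zero]
          exact dvd_sub (root_dvd hq.pos hζq hAq)
            (Dvd.dvd.mul_left (root_dvd hq.pos hζq hBq) _)
        · obtain ⟨s, hs⟩ := phase_lemma hp hq hop hne hω PA PB c hBq hc
          have hcrux : (ω ^ p) ^ m = (ω ^ p) ^ s :=
            crux hp hq hne hω b hb' PA m s hBω hBq hΦn hs
          refine root_dvd hq.pos hζq ?_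
          rw [map_sub, map_mul, map_pow, Polynomial.aeval_X, hs, hcrux, sub_self]
  -- all evaluations
  have hall : ∀ k, k < p * q →
      Polynomial.aeval (ω ^ k) PA = (ω ^ k) ^ j * Polynomial.aeval (ω ^ k) PB := by
    intro k hk
    have hgd : (p * q) / Nat.gcd k (p * q) ∣ p * q :=
      Nat.div_dvd_of_dvd (Nat.gcd_dvd_right _ _)
    have hprim := prim_pow_gcd (k := k) hnpos hω
    have hdvd' : Polynomial.cyclotomic ((p * q) / Nat.gcd k (p * q)) ℤ
        ∣ (PA - Polynomial.X ^ j * PB) := by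
      rcases divisor_four hp hq hne hgd with h4 | h4 | h4 | h4 <;> rw [h4]
      · exact hdvd1 j
      · exact hjp
      · exact hjq
      · exact hjn
    have hdpos : 0 < (p * q) / Nat.gcd k (p * q) :=
      Nat.div_pos (Nat.le_of_dvd hnpos (Nat.gcd_dvd_right _ _))
        (Nat.gcd_pos_of_pos_right _ hnpos)
    have h0 := aeval_of_cyclo_dvd hdpos hprim hdvd'
    rw [map_sub, map_mul, map_pow, Polynomial.aeval_X] at h0
    exact sub_eq_zero.mp h0
  -- inversion
  refine ⟨j, fun i hi => ?_⟩
  have hllt : (i + j) % (p * q) < p * q := Nat.mod_lt _ hnpos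
  have hA := inv_sum hnpos hω a hllt
  have hB := inv_sum hnpos hω b hi
  have hterm : ∀ k ∈ Finset.range (p * q),
      (∑ x ∈ Finset.range (p * q), (b x : ℂ) * (ω ^ k) ^ x) * ((ω ^ i) ^ k)⁻¹
        = (∑ x ∈ Finset.range (p * q), (a x : ℂ) * (ω ^ k) ^ x)
          * ((ω ^ ((i + j) % (p * q))) ^ k)⁻¹ := by
    intro k hk
    have h2 := hall k (Finset.mem_range.mp hk)
    rw [hPA, hPB, aeval_seqPoly, aeval_seqPoly] at h2
    have hkj : ((ω ^ k) ^ j : ℂ) ≠ 0 := pow_ne_zero _ (pow_ne_zero _ hw0)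
    have h3 : (∑ x ∈ Finset.range (p * q), (b x : ℂ) * (ω ^ k) ^ x)
        = (∑ x ∈ Finset.range (p * q), (a x : ℂ) * (ω ^ k) ^ x) * ((ω ^ k) ^ j)⁻¹ := by
      rw [h2]; field_simp
    have h4 : ((ω ^ k) ^ j : ℂ) * (ω ^ i) ^ k = (ω ^ ((i + j) % (p * q))) ^ k := by
      have h5 : (i + j) * k ≡ ((i + j) % (p * q)) * k [MOD p * q] :=
        (Nat.mod_modEq (i + j) (p * q)).symm.mul_right k
      rw [← pow_mul, ← pow_mul, ← pow_mul, ← pow_add]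
      have h6 : k * j + i * k = (i + j) * k := by ring
      rw [h6, pow_eq_pow_mod ((i + j) * k) hω.pow_eq_one,
        pow_eq_pow_mod (((i + j) % (p * q)) * k) hω.pow_eq_one, h5]
    rw [h3, mul_assoc, ← mul_inv, h4]
  rw [← Finset.sum_congr rfl hterm] at hA
  rw [hA] at hB
  have hcast : ((b i : ℂ)) = ((a ((i + j) % (p * q)) : ℂ)) :=
    mul_left_cancel₀ (Nat.cast_ne_zero.mpr hnpos.ne' : ((p * q : ℕ) : ℂ) ≠ 0) hB.symm
  exact_mod_cast hcast
end

section
/- Let n = p² where p is an odd prime, and let ω = e^{2πi/n}. Suppose a_0, …, a_{n−1}, b_0, …, b_{n−1} ∈ {0,1} are such that for every 0 ≤ k ≤ n−1 there exists an integer c_k with Σ_{i=0}^{n−1} a_i ω^{i·k} = ω^{c_k} · Σ_{i=0}^{n−1} b_i ω^{i·k}. Then the sequences (a_i) and (b_i) are cyclic shifts of each other. -/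
open Finset Polynomial

lemma mod_cancel {m q1 q2 l : ℕ} (hl : l < m) (hq : (q1 + q2) % m = 0) :
    ((l + q1) % m + q2) % m = l := by
  rw [Nat.mod_add_mod, add_assoc, Nat.add_mod, hq, Nat.add_zero, Nat.mod_mod_of_dvd,
    Nat.mod_eq_of_lt hl]
  exact dvd_rfl

lemma key_mod {m q : ℕ} (hm : 0 < m) : (q + (m - q % m)) % m = 0 := by
  have h3 : m * (q / m) + q % m = q := Nat.div_add_mod q m
  have h2 : q % m < m := Nat.mod_lt _ hm
  have : q + (m - q % m) = m * (q / m) + m := by omega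
  rw [this]
  simp [Nat.add_mod]

lemma sum_shift {M : Type*} [AddCommMonoid M] {m : ℕ} (hm : 0 < m) (q : ℕ) (f : ℕ → M) :
    ∑ l ∈ Finset.range m, f ((l + q) % m) = ∑ l ∈ Finset.range m, f l := by
  apply Finset.sum_nbij' (i := fun l => (l + q) % m) (j := fun l => (l + (m - q % m)) % m)
  · intro a ha; exact Finset.mem_range.2 (Nat.mod_lt _ hm)
  · intro a ha; exact Finset.mem_range.2 (Nat.mod_lt _ hm)
  · intro a ha
    exact mod_cancel (Finset.mem_range.1 ha) (key_mod hm)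
  · intro a ha
    refine mod_cancel (Finset.mem_range.1 ha) ?_
    rw [add_comm]; exact key_mod hm
  · intro a ha; rfl

lemma sum_range_rect {M : Type*} [AddCommMonoid M] (f : ℕ → M) (p k : ℕ) :
    ∑ i ∈ Finset.range (p * k), f i = ∑ l ∈ Finset.range k, ∑ j ∈ Finset.range p, f (j + l * p) := by
  induction k with
  | zero => simp
  | succ k ih =>
      rw [Nat.mul_succ, Finset.sum_range_add, ih, Finset.sum_range_succ]
      congr 1
      apply Finset.sum_congr rfl
      intro j hj
      congr 1
      ring

lemma sum_range_sq {M : Type*} [AddCommMonoid M] (f : ℕ → M) (p : ℕ) :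
    ∑ i ∈ Finset.range (p * p), f i = ∑ j ∈ Finset.range p, ∑ l ∈ Finset.range p, f (j + l * p) := by
  rw [sum_range_rect, Finset.sum_comm]

lemma col_mod' {p : ℕ} (hp : 0 < p) (y A : ℕ) (hy : y < p) :
    (y + A * p) % (p * p) = y + (A % p) * p := by
  have hA2 : p * (A / p) + A % p = A := Nat.div_add_mod A p
  have h2 : y + A * p = (y + (A % p) * p) + (A / p) * (p * p) := by
    calc y + A * p = y + (p * (A / p) + A % p) * p := by rw [hA2]
    _ = (y + (A % p) * p) + (A / p) * (p * p) := by ring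
  rw [h2, Nat.add_mul_mod_self_right]
  apply Nat.mod_eq_of_lt
  have hb2 : A % p + 1 ≤ p := Nat.mod_lt _ hp
  nlinarith

lemma col_mod {p : ℕ} (hp : 0 < p) (x l : ℕ) :
    (x + l * p) % (p * p) = x % p + ((x / p + l) % p) * p := by
  have h1 : x + l * p = x % p + (x / p + l) * p := by
    calc x + l * p = (x % p + p * (x / p)) + l * p := by rw [Nat.mod_add_div]
    _ = x % p + (x / p + l) * p := by ring
  rw [h1, col_mod' hp _ _ (Nat.mod_lt _ hp)]

lemma col_sum {M : Type*} [AddCommMonoid M] (f : ℕ → M) {p : ℕ} (hp : 0 < p) (x : ℕ) :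
    ∑ l ∈ Finset.range p, f ((x + l * p) % (p * p)) = ∑ l ∈ Finset.range p, f (x % p + l * p) := by
  have h1 : ∀ l ∈ Finset.range p, f ((x + l * p) % (p * p)) = (fun l => f (x % p + l * p)) ((l + x / p) % p) := by
    intro l hl
    rw [col_mod hp x l]
    simp [add_comm]
  exact (Finset.sum_congr rfl h1).trans (sum_shift hp (x / p) (fun l => f (x % p + l * p)))
lemma coeff_tpoly (m : ℕ) (t : ℕ → ℤ) (j : ℕ) (hj : j < m) :
    (∑ i ∈ Finset.range m, Polynomial.C (t i) * Polynomial.X ^ i).coeff j = t j := by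
  rw [Polynomial.finset_sum_coeff]
  have : ∀ i ∈ Finset.range m, (Polynomial.C (t i) * Polynomial.X ^ i).coeff j
      = if j = i then t i else 0 := by
    intro i _
    rw [Polynomial.coeff_C_mul, Polynomial.coeff_X_pow]
    by_cases h : j = i <;> simp [h]
  rw [Finset.sum_congr rfl this, Finset.sum_ite_eq (Finset.range m) j t]
  simp [hj]

lemma natDegree_tpoly (m : ℕ) (t : ℕ → ℤ) :
    (∑ i ∈ Finset.range m, Polynomial.C (t i) * Polynomial.X ^ i).natDegree ≤ m - 1 := by
  apply Polynomial.natDegree_sum_le_of_forall_le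
  intro i hi
  apply le_trans (Polynomial.natDegree_C_mul_le _ _)
  rw [Polynomial.natDegree_X_pow]
  have := Finset.mem_range.1 hi
  omega

lemma cyclotomic_dvd_of_root {m : ℕ} (hm : 0 < m) {μ : ℂ} (hμ : IsPrimitiveRoot μ m)
    (t : ℕ → ℤ) (h : ∑ i ∈ Finset.range m, (t i : ℂ) * μ ^ i = 0) :
    Polynomial.cyclotomic m ℤ ∣ ∑ i ∈ Finset.range m, Polynomial.C (t i) * Polynomial.X ^ i := by
  rw [Polynomial.cyclotomic_eq_minpoly hμ hm]
  apply minpoly.isIntegrallyClosed_dvd (hμ.isIntegral hm)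
  rw [map_sum]
  simpa using h

lemma lem_L1 {p : ℕ} (hp : p.Prime) {ζ : ℂ} (hζ : IsPrimitiveRoot ζ p) (t : ℕ → ℤ)
    (h : ∑ j ∈ Finset.range p, (t j : ℂ) * ζ ^ j = 0) :
    ∀ j < p, t j = t 0 := by
  haveI : Fact p.Prime := ⟨hp⟩
  set T := ∑ i ∈ Finset.range p, Polynomial.C (t i) * Polynomial.X ^ i with hT
  obtain ⟨G, hG⟩ := cyclotomic_dvd_of_root hp.pos hζ t h
  rw [← hT] at hG
  by_cases h0 : T = 0
  · intro j hj
    have h1 := coeff_tpoly p t j hj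
    have h2 := coeff_tpoly p t 0 hp.pos
    rw [← hT, h0] at h1 h2
    simp at h1 h2
    omega
  · have hG0 : G ≠ 0 := by rintro rfl; simp at hG; exact h0 hG
    have hdeg : T.natDegree = (p - 1) + G.natDegree := by
      rw [hG, Polynomial.natDegree_mul (Polynomial.cyclotomic_ne_zero p ℤ) hG0,
        Polynomial.natDegree_cyclotomic, Nat.totient_prime hp]
    have hdG : G.natDegree = 0 := by
      have h1 := natDegree_tpoly p t
      rw [← hT] at h1
      omega
    obtain ⟨e, rfl⟩ := Polynomial.natDegree_eq_zero.1 hdG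
    intro j hj
    have h1 := coeff_tpoly p t j hj
    have h2 := coeff_tpoly p t 0 hp.pos
    rw [← hT, hG, Polynomial.coeff_mul_C,
      Polynomial.cyclotomic_prime] at h1 h2
    have hc : ∀ i < p, (∑ k ∈ Finset.range p, (Polynomial.X : Polynomial ℤ) ^ k).coeff i = 1 := by
      intro i hi
      rw [Polynomial.finset_sum_coeff]
      simp only [Polynomial.coeff_X_pow]
      rw [Finset.sum_ite_eq (Finset.range p) i (fun _ => (1:ℤ))]
      simp [hi]
    rw [hc j hj] at h1
    rw [hc 0 hp.pos] at h2
    omega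

lemma lem_L2 {p : ℕ} (hp : p.Prime) {ω : ℂ} (hω : IsPrimitiveRoot ω (p ^ 2)) (t : ℕ → ℤ)
    (h : ∑ i ∈ Finset.range (p ^ 2), (t i : ℂ) * ω ^ i = 0) :
    ∀ i < p ^ 2, t i = t (i % p) := by
  have hp0 := hp.pos
  have hp1 := hp.two_le
  have hn0 : 0 < p ^ 2 := by positivity
  set T := ∑ i ∈ Finset.range (p ^ 2), Polynomial.C (t i) * Polynomial.X ^ i with hT
  obtain ⟨G, hG⟩ := cyclotomic_dvd_of_root hn0 hω t h
  rw [← hT] at hG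
  have hmodlt : ∀ i : ℕ, i % p < p ^ 2 := fun i =>
    lt_of_lt_of_le (Nat.mod_lt _ hp0) (by nlinarith [sq_nonneg p])
  by_cases h0 : T = 0
  · intro i hi
    have h1 := coeff_tpoly (p ^ 2) t i hi
    have h2 := coeff_tpoly (p ^ 2) t (i % p) (hmodlt i)
    rw [← hT, h0] at h1 h2
    simp at h1 h2
    omega
  · have hG0 : G ≠ 0 := by rintro rfl; simp at hG; exact h0 hG
    have hdeg : T.natDegree = (p ^ 2 - p) + G.natDegree := by
      rw [hG, Polynomial.natDegree_mul (Polynomial.cyclotomic_ne_zero _ ℤ) hG0,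
        Polynomial.natDegree_cyclotomic, Nat.totient_prime_pow hp (by norm_num : 0 < 2)]
      have h9 : p ^ (2 - 1) * (p - 1) = p ^ 2 - p := by
        rw [pow_one, Nat.mul_sub, mul_one, sq]
      rw [h9]
    have hdG : G.natDegree ≤ p - 1 := by
      have h1 := natDegree_tpoly (p ^ 2) t
      rw [← hT] at h1
      have : p ≤ p ^ 2 := by nlinarith
      omega
    -- key coefficient formula
    have hkey : ∀ i < p ^ 2, T.coeff i = G.coeff (i % p) := by
      intro i hi
      have hGform : T = ∑ l ∈ Finset.range p, G * Polynomial.X ^ (p * l) := by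
        rw [hG, Polynomial.cyclotomic_prime_pow_eq_geom_sum hp (n := 1), mul_comm,
          Finset.mul_sum]
        apply Finset.sum_congr rfl
        intro l _
        rw [← pow_mul, pow_one]
      rw [hGform, Polynomial.finset_sum_coeff]
      have hterm : ∀ l ∈ Finset.range p, (G * Polynomial.X ^ (p * l)).coeff i
          = if p * l ≤ i then G.coeff (i - p * l) else 0 := by
        intro l _
        rw [Polynomial.coeff_mul_X_pow']
      rw [Finset.sum_congr rfl hterm]
      have hdiv : i / p ∈ Finset.range p := by
        refine Finset.mem_range.2 ?_
        apply Nat.div_lt_of_lt_mul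
        rw [← sq]; exact hi
      rw [Finset.sum_eq_single_of_mem (i / p) hdiv]
      · have hle : p * (i / p) ≤ i := Nat.mul_div_le i p
        rw [if_pos hle]
        congr 1
        have := Nat.div_add_mod i p
        omega
      · intro l hl hlne
        have hlp := Finset.mem_range.1 hl
        by_cases hle : p * l ≤ i
        · rw [if_pos hle]
          apply Polynomial.coeff_eq_zero_of_natDegree_lt
          have hlq : l < i / p := by
            rcases Nat.lt_or_ge l (i / p) with h' | h'
            · exact h'
            · exfalso
              have : i / p < l := lt_of_le_of_ne h' (Ne.symm hlne)
              have h2 : p * (i / p + 1) ≤ p * l := Nat.mul_le_mul_left p this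
              have h3 := Nat.div_add_mod i p
              have h4 := Nat.mod_lt i hp0
              rw [Nat.mul_add, Nat.mul_one] at h2
              omega
          have h4 : p * (l + 1) ≤ p * (i / p) := Nat.mul_le_mul_left p hlq
          have h5 : p * (i / p) ≤ i := Nat.mul_div_le i p
          have h6 : p * (l + 1) = p * l + p := by ring
          omega
        · rw [if_neg hle]
    intro i hi
    have h1 := coeff_tpoly (p ^ 2) t i hi
    have h2 := coeff_tpoly (p ^ 2) t (i % p) (hmodlt i)
    rw [← hT] at h1 h2
    rw [hkey i hi] at h1
    rw [hkey (i % p) (hmodlt i)] at h2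
    rw [Nat.mod_mod_of_dvd i (dvd_refl p)] at h2
    omega

lemma pow_mod_eq {n : ℕ} {ω : ℂ} (hω : ω ^ n = 1) (m : ℕ) : ω ^ m = ω ^ (m % n) := by
  conv_lhs => rw [← Nat.div_add_mod m n]
  rw [pow_add, pow_mul, hω, one_pow, one_mul]

lemma zpow_reduce {n : ℕ} (hn : 0 < n) {ω : ℂ} (hω0 : ω ≠ 0) (hω : ω ^ n = 1) (c : ℤ) :
    ∃ c' : ℕ, c' < n ∧ ω ^ c = ω ^ c' := by
  have hn' : (n : ℤ) ≠ 0 := by exact_mod_cast hn.ne'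
  refine ⟨(c % n).toNat, ?_, ?_⟩
  · have h1 : 0 ≤ c % n := Int.emod_nonneg c hn'
    have h2 : c % n < n := Int.emod_lt_of_pos c (by exact_mod_cast hn)
    omega
  · have h1 : 0 ≤ c % n := Int.emod_nonneg c hn'
    have key : ω ^ c = ω ^ (c % n) := by
      conv_lhs => rw [← Int.mul_ediv_add_emod c n]
      rw [zpow_add₀ hω0, zpow_mul, zpow_natCast, hω, one_zpow, one_mul]
    rw [key, ← zpow_natCast, Int.toNat_of_nonneg h1]

lemma abs_eq_one_of_pow {n : ℕ} (hn : 0 < n) {ω : ℂ} (hω : ω ^ n = 1) : ‖ω‖ = 1 := by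
  have h1 : (‖ω‖) ^ n = 1 := by
    rw [← norm_pow, hω, norm_one]
  rcases lt_trichotomy (‖ω‖) 1 with h | h | h
  · exfalso
    have := pow_lt_one₀ (norm_nonneg ω) h hn.ne'
    rw [h1] at this; exact lt_irrefl 1 this
  · exact h
  · exfalso
    have := one_lt_pow₀ h hn.ne'
    rw [h1] at this; exact lt_irrefl 1 this

lemma shift_eq {N : ℕ} (hN : 0 < N) {ω : ℂ} (hω1 : ω ^ N = 1) (g : ℕ → ℂ) (c' : ℕ) (hc' : c' < N) :
    ω ^ c' * ∑ i ∈ Finset.range N, g i * ω ^ i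
      = ∑ i ∈ Finset.range N, g ((i + (N - c')) % N) * ω ^ i := by
  have hcc : (c' + (N - c')) % N = 0 := by
    rw [Nat.add_sub_cancel' hc'.le, Nat.mod_self]
  have step1 : ω ^ c' * ∑ i ∈ Finset.range N, g i * ω ^ i
      = ∑ i ∈ Finset.range N, g i * ω ^ ((i + c') % N) := by
    rw [Finset.mul_sum]
    apply Finset.sum_congr rfl
    intro i _
    rw [← pow_mod_eq hω1, pow_add]
    ring
  rw [step1, ← sum_shift hN c' (fun i => g ((i + (N - c')) % N) * ω ^ i)]
  apply Finset.sum_congr rfl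
  intro i hi
  rw [mod_cancel (Finset.mem_range.1 hi) hcc]

lemma group_cols {p : ℕ} (hp : 0 < p) {ζ : ℂ} (hζ1 : ζ ^ p = 1) (f : ℕ → ℕ) :
    ∑ i ∈ Finset.range (p * p), (f i : ℂ) * ζ ^ i
      = ∑ j ∈ Finset.range p, ((∑ l ∈ Finset.range p, (f (j + l * p) : ℤ) : ℤ) : ℂ) * ζ ^ j := by
  rw [sum_range_sq (fun i => (f i : ℂ) * ζ ^ i) p]
  apply Finset.sum_congr rfl
  intro j _
  push_cast
  rw [Finset.sum_mul]
  apply Finset.sum_congr rfl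
  intro l _
  rw [pow_add, mul_comm l p, pow_mul, hζ1, one_pow, mul_one]

lemma entry_eq_of_col {p : ℕ} (hp : 0 < p) (f g : ℕ → ℕ)
    (hf1 : ∀ l < p, f l ≤ 1) (hg1 : ∀ l < p, g l ≤ 1)
    (hfg : ∑ l ∈ Finset.range p, (f l : ℤ) = ∑ l ∈ Finset.range p, (g l : ℤ))
    (hS : (∑ l ∈ Finset.range p, (f l : ℤ)) = 0 ∨ (∑ l ∈ Finset.range p, (f l : ℤ)) = p)
    (lf lg : ℕ) (hlf : lf < p) (hlg : lg < p) : f lf = g lg := by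
  have hz : ∀ (F : ℕ → ℕ), (∑ l ∈ Finset.range p, (F l : ℤ)) = 0 → ∀ l < p, F l = 0 := by
    intro F hF l hl
    have := (Finset.sum_eq_zero_iff_of_nonneg (fun i _ => by positivity)).1 hF l (Finset.mem_range.2 hl)
    exact_mod_cast this
  have ho : ∀ (F : ℕ → ℕ), (∀ l < p, F l ≤ 1) → (∑ l ∈ Finset.range p, (F l : ℤ)) = p →
      ∀ l < p, F l = 1 := by
    intro F hF1 hF l hl
    have hsum : ∑ l ∈ Finset.range p, ((1 : ℤ) - (F l : ℤ)) = 0 := by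
      rw [Finset.sum_sub_distrib, hF, Finset.sum_const, Finset.card_range]
      simp
    have := (Finset.sum_eq_zero_iff_of_nonneg (fun i hi => by
      have := hF1 i (Finset.mem_range.1 hi)
      have : ((F i : ℤ)) ≤ 1 := by exact_mod_cast this
      omega)).1 hsum l (Finset.mem_range.2 hl)
    have hFl : ((F l : ℤ)) = 1 := by omega
    exact_mod_cast hFl
  rcases hS with h0 | hpp
  · rw [hz f h0 lf hlf, hz g (by rw [← hfg, h0]) lg hlg]
  · rw [ho f hf1 hpp lf hlf, ho g hg1 (by rw [← hfg, hpp]) lg hlg]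

lemma step_kp {p : ℕ} (hp : p.Prime) {ω : ℂ} (hω : IsPrimitiveRoot ω (p ^ 2))
    (u v : ℕ → ℤ) (hSuv : ∑ j ∈ Finset.range p, u j = ∑ j ∈ Finset.range p, v j)
    (e' : ℕ) (he' : e' < p ^ 2)
    (heq : ∑ j ∈ Finset.range p, (u j : ℂ) * (ω ^ p) ^ j
      = ω ^ e' * ∑ j ∈ Finset.range p, (v j : ℂ) * (ω ^ p) ^ j) :
    ∃ d, d < p ∧ ∀ j < p, v j = u ((j + d) % p) := by
  have hp0 := hp.pos
  have hpp : p ^ 2 = p * p := sq p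
  have hω1 : ω ^ (p ^ 2) = 1 := hω.pow_eq_one
  set ζ := ω ^ p with hζdef
  have hζ : IsPrimitiveRoot ζ p := hω.pow (by positivity) hpp
  have hζ1 : ζ ^ p = 1 := hζ.pow_eq_one
  by_cases hpe : p ∣ e'
  · -- easy case : e' = p * d0
    obtain ⟨d0, rfl⟩ := hpe
    have hd0p : d0 < p := by
      rw [hpp] at he'
      exact Nat.lt_of_mul_lt_mul_left he'
    have hω_e : ω ^ (p * d0) = ζ ^ d0 := by rw [hζdef, pow_mul]
    rw [hω_e, shift_eq hp0 hζ1 (fun j => (v j : ℂ)) d0 hd0p] at heq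
    set t3 : ℕ → ℤ := fun j => u j - v ((j + (p - d0)) % p) with ht3def
    have key3 : ∑ j ∈ Finset.range p, (t3 j : ℂ) * ζ ^ j = 0 := by
      have expand : ∀ j, (t3 j : ℂ) * ζ ^ j
          = (u j : ℂ) * ζ ^ j - (v ((j + (p - d0)) % p) : ℂ) * ζ ^ j := by
        intro j; rw [ht3def]; push_cast; ring
      rw [Finset.sum_congr rfl (fun j _ => expand j), Finset.sum_sub_distrib, heq, sub_self]
    have hconst := lem_L1 hp hζ t3 key3
    have hsum3 : ∑ j ∈ Finset.range p, t3 j = 0 := by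
      rw [ht3def]
      simp only []
      rw [Finset.sum_sub_distrib, sum_shift hp0 (p - d0) v, hSuv, sub_self]
    have ht30 : t3 0 = 0 := by
      have h1 : ∑ j ∈ Finset.range p, t3 j = ∑ j ∈ Finset.range p, t3 0 :=
        Finset.sum_congr rfl (fun j hj => hconst j (Finset.mem_range.1 hj))
      rw [hsum3, Finset.sum_const, Finset.card_range, nsmul_eq_mul] at h1
      have hpz : (p : ℤ) ≠ 0 := by exact_mod_cast hp0.ne'
      have h1 := mul_eq_zero.1 h1.symm
      tauto
    have ht3z : ∀ j < p, t3 j = 0 := fun j hj => by rw [hconst j hj, ht30]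
    refine ⟨d0, hd0p, fun j hj => ?_⟩
    have hj' : (j + d0) % p < p := Nat.mod_lt _ hp0
    have h2 := ht3z _ hj'
    rw [ht3def] at h2
    simp only [] at h2
    have h3 : ((j + d0) % p + (p - d0)) % p = j :=
      mod_cancel hj (by rw [Nat.add_sub_cancel' hd0p.le, Nat.mod_self])
    rw [h3] at h2
    omega
  · -- hard case : p does not divide e'
    set r := e' % p with hrdef
    set q := e' / p with hqdef
    have hr : r ≠ 0 := fun h0 => hpe (Nat.dvd_of_mod_eq_zero h0)
    have hrp : r < p := Nat.mod_lt _ hp0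
    have hqp : q < p := by
      apply Nat.div_lt_of_lt_mul
      rw [← hpp]; exact he'
    have hqr : p * q + r = e' := Nat.div_add_mod e' p
    have hq0 : (q + (p - q)) % p = 0 := by rw [Nat.add_sub_cancel' hqp.le, Nat.mod_self]
    set t2 : ℕ → ℤ := fun m =>
      (if m % p = 0 then u (m / p) else 0) - (if m % p = r then v ((m / p + (p - q)) % p) else 0)
      with ht2def
    have hsum1 : ∑ m ∈ Finset.range (p * p),
        (if m % p = 0 then (u (m / p) : ℂ) else 0) * ω ^ m
        = ∑ l ∈ Finset.range p, (u l : ℂ) * ζ ^ l := by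
      rw [sum_range_sq (fun m => (if m % p = 0 then (u (m / p) : ℂ) else 0) * ω ^ m) p]
      rw [Finset.sum_eq_single_of_mem 0 (Finset.mem_range.2 hp0)]
      · apply Finset.sum_congr rfl
        intro l _
        have h1 : (0 + l * p) % p = 0 := by rw [Nat.zero_add, Nat.mul_mod_left]
        have h2 : (0 + l * p) / p = l := by rw [Nat.zero_add, Nat.mul_div_cancel l hp0]
        rw [if_pos h1, h2, Nat.zero_add, mul_comm l p, pow_mul, ← hζdef]
      · intro j hj hjne
        apply Finset.sum_eq_zero
        intro l _
        have h1 : (j + l * p) % p = j := by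
          rw [Nat.add_mul_mod_self_right, Nat.mod_eq_of_lt (Finset.mem_range.1 hj)]
        rw [h1, if_neg hjne, zero_mul]
    have hsum2 : ∑ m ∈ Finset.range (p * p),
        (if m % p = r then (v ((m / p + (p - q)) % p) : ℂ) else 0) * ω ^ m
        = ω ^ e' * ∑ j ∈ Finset.range p, (v j : ℂ) * ζ ^ j := by
      have hterm : ∀ j, (v j : ℂ) * ζ ^ j * ω ^ e' = (v j : ℂ) * ω ^ (r + ((j + q) % p) * p) := by
        intro j
        have h1 : (ζ : ℂ) ^ j * ω ^ e' = ω ^ (r + ((j + q) % p) * p) := by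
          rw [hζdef, ← pow_mul, ← pow_add]
          have h2 : p * j + e' = (j + q) * p + r := by rw [← hqr]; ring
          rw [h2]
          have h3 : ω ^ ((j + q) * p) = ω ^ (((j + q) % p) * p) := by
            rw [mul_comm (j+q) p, pow_mul, ← hζdef, pow_mod_eq hζ1,
              mul_comm ((j + q) % p) p, pow_mul, ← hζdef]
          rw [pow_add, h3, ← pow_add, add_comm]
        rw [mul_assoc, h1]
      have hRHS : ω ^ e' * ∑ j ∈ Finset.range p, (v j : ℂ) * ζ ^ j
          = ∑ l ∈ Finset.range p, (v ((l + (p - q)) % p) : ℂ) * ω ^ (r + l * p) := by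
        rw [Finset.mul_sum]
        have step1 : ∀ j ∈ Finset.range p, ω ^ e' * ((v j : ℂ) * ζ ^ j)
            = (fun l => (v ((l + (p - q)) % p) : ℂ) * ω ^ (r + l * p)) ((j + q) % p) := by
          intro j hj
          have hc := mod_cancel (Finset.mem_range.1 hj) hq0
          simp only []
          rw [hc, ← hterm j]
          ring
        rw [Finset.sum_congr rfl step1,
          sum_shift hp0 q (fun l => (v ((l + (p - q)) % p) : ℂ) * ω ^ (r + l * p))]
      rw [hRHS]
      rw [sum_range_sq (fun m => (if m % p = r then (v ((m / p + (p - q)) % p) : ℂ) else 0) * ω ^ m) p]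
      rw [Finset.sum_eq_single_of_mem r (Finset.mem_range.2 hrp)]
      · apply Finset.sum_congr rfl
        intro l _
        have h1 : (r + l * p) % p = r := by
          rw [Nat.add_mul_mod_self_right, Nat.mod_eq_of_lt hrp]
        have h2 : (r + l * p) / p = l := by
          rw [Nat.add_mul_div_right r l hp0, Nat.div_eq_of_lt hrp, Nat.zero_add]
        rw [if_pos h1, h2]
      · intro j hj hjne
        apply Finset.sum_eq_zero
        intro l _
        have h1 : (j + l * p) % p = j := by
          rw [Nat.add_mul_mod_self_right, Nat.mod_eq_of_lt (Finset.mem_range.1 hj)]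
        rw [h1, if_neg hjne, zero_mul]
    have key2 : ∑ m ∈ Finset.range (p ^ 2), (t2 m : ℂ) * ω ^ m = 0 := by
      have expand : ∀ m, (t2 m : ℂ) * ω ^ m
          = (if m % p = 0 then (u (m / p) : ℂ) else 0) * ω ^ m
            - (if m % p = r then (v ((m / p + (p - q)) % p) : ℂ) else 0) * ω ^ m := by
        intro m
        rw [ht2def]
        simp only []
        push_cast [apply_ite (fun z : ℤ => (z : ℂ))]
        ring
      rw [hpp, Finset.sum_congr rfl (fun m _ => expand m), Finset.sum_sub_distrib,
        hsum1, hsum2, heq, sub_self]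
    have ht2 := lem_L2 hp hω t2 key2
    have ht2_0 : t2 0 = u 0 := by
      rw [ht2def]
      simp only [Nat.zero_mod, Nat.zero_div]
      rw [if_pos trivial, if_neg (fun h0 : (0:ℕ) = r => hr h0.symm), sub_zero]
    have ht2_r : t2 r = - v ((p - q) % p) := by
      rw [ht2def]
      simp only []
      rw [Nat.mod_eq_of_lt hrp, if_neg hr, if_pos rfl, Nat.div_eq_of_lt hrp, Nat.zero_add,
        zero_sub]
    have uconst : ∀ l < p, u l = u 0 := by
      intro l hl
      have hlt : l * p < p ^ 2 := by rw [hpp]; exact Nat.mul_lt_mul_of_lt_of_le hl le_rfl hp0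
      have h1 := ht2 (l * p) hlt
      have h2 : (l * p) % p = 0 := Nat.mul_mod_left l p
      have h3 : t2 (l * p) = u l := by
        rw [ht2def]
        simp only []
        rw [h2, if_pos rfl, Nat.mul_div_cancel l hp0, if_neg (fun h0 => hr h0.symm), sub_zero]
      rw [h3, h2, ht2_0] at h1
      exact h1
    have vconst : ∀ l < p, v ((l + (p - q)) % p) = v ((p - q) % p) := by
      intro l hl
      have hlt : r + l * p < p ^ 2 := by
        rw [hpp]
        have h4 : l * p ≤ (p - 1) * p := Nat.mul_le_mul_right p (by omega)
        have h5 : (p - 1) * p = p * p - p := by rw [Nat.sub_one_mul]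
        have h6 : p ≤ p * p := Nat.le_mul_of_pos_left p hp0
        omega
      have h1 := ht2 (r + l * p) hlt
      have h2 : (r + l * p) % p = r := by
        rw [Nat.add_mul_mod_self_right, Nat.mod_eq_of_lt hrp]
      have h3 : t2 (r + l * p) = - v ((l + (p - q)) % p) := by
        rw [ht2def]
        simp only []
        rw [h2, if_neg hr, if_pos rfl, Nat.add_mul_div_right r l hp0, Nat.div_eq_of_lt hrp,
          Nat.zero_add, zero_sub]
      rw [h3, h2, ht2_r] at h1
      omega
    have vconst' : ∀ j < p, v j = v ((p - q) % p) := by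
      intro j hj
      have hl : (j + q) % p < p := Nat.mod_lt _ hp0
      have h1 := vconst ((j + q) % p) hl
      rw [mod_cancel hj hq0] at h1
      exact h1
    have huv0 : u 0 = v ((p - q) % p) := by
      have h1 : ∑ j ∈ Finset.range p, u j = p * u 0 := by
        rw [Finset.sum_congr rfl (fun j hj => uconst j (Finset.mem_range.1 hj)),
          Finset.sum_const, Finset.card_range, nsmul_eq_mul]
      have h2 : ∑ j ∈ Finset.range p, v j = p * v ((p - q) % p) := by
        rw [Finset.sum_congr rfl (fun j hj => vconst' j (Finset.mem_range.1 hj)),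
          Finset.sum_const, Finset.card_range, nsmul_eq_mul]
      rw [h1, h2] at hSuv
      have hpz : (p : ℤ) ≠ 0 := by exact_mod_cast hp0.ne'
      exact mul_left_cancel₀ hpz hSuv
    refine ⟨0, hp0, fun j hj => ?_⟩
    have h1 : (j + 0) % p = j := by rw [Nat.add_zero, Nat.mod_eq_of_lt hj]
    rw [h1, vconst' j hj, ← huv0, uconst j hj]
theorem stmt_4 (p n : ℕ) (hp : p.Prime) (hop : Odd p) (hn : n = p ^ 2)
    (a b : ℕ → ℕ)
    (ha : ∀ i < n, a i = 0 ∨ a i = 1) (hb : ∀ i < n, b i = 0 ∨ b i = 1)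
    (h : ∀ k < n, ∃ c : ℤ, expSum n a k = primRoot n ^ c * expSum n b k) :
    ∃ j : ℕ, ∀ i < n, b i = a ((i + j) % n) := by
  subst hn
  have hp0 : 0 < p := hp.pos
  have hp2 : 2 ≤ p := hp.two_le
  set N := p ^ 2 with hNdef
  have hpp' : N = p * p := sq p
  have hN0 : 0 < N := by positivity
  have hN1 : 1 < N := by rw [hpp']; nlinarith
  have hpN : p < N := by rw [hpp']; nlinarith
  set ω := primRoot N with hωdef
  have hω : IsPrimitiveRoot ω N := Complex.isPrimitiveRoot_exp N hN0.ne'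
  have hω1 : ω ^ N = 1 := hω.pow_eq_one
  have hω0 : ω ≠ 0 := by
    intro h0
    rw [h0, zero_pow hN0.ne'] at hω1
    exact zero_ne_one hω1
  have hζ1 : (ω ^ p) ^ p = 1 := by rw [← pow_mul, ← hpp', hω1]
  -- k = 0 : total sums agree
  obtain ⟨c0, hc0⟩ := h 0 hN0
  have hSab : (∑ i ∈ Finset.range N, a i) = ∑ i ∈ Finset.range N, b i := by
    have h1 : expSum N a 0 = ((∑ i ∈ Finset.range N, a i : ℕ) : ℂ) := by
      unfold expSum; push_cast; simp
    have h2 : expSum N b 0 = ((∑ i ∈ Finset.range N, b i : ℕ) : ℂ) := by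
      unfold expSum; push_cast; simp
    rw [h1, h2] at hc0
    have h3 := congrArg norm hc0
    rw [norm_mul, norm_zpow, abs_eq_one_of_pow hN0 hω1, one_zpow, one_mul,
      Complex.norm_natCast, Complex.norm_natCast] at h3
    exact_mod_cast h3
  -- k = 1
  obtain ⟨c1, hc1⟩ := h 1 hN1
  obtain ⟨c', hc'N, hc'⟩ := zpow_reduce hN0 hω0 hω1 c1
  have hcc' : (c' + (N - c')) % N = 0 := by rw [Nat.add_sub_cancel' hc'N.le, Nat.mod_self]
  set t : ℕ → ℤ := fun i => (a i : ℤ) - (b ((i + (N - c')) % N) : ℤ) with htdef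
  have key1 : ∑ i ∈ Finset.range N, (t i : ℂ) * ω ^ i = 0 := by
    have h1 : expSum N a 1 = ∑ i ∈ Finset.range N, (a i : ℂ) * ω ^ i := by
      unfold expSum; rw [← hωdef]; simp
    have h2 : expSum N b 1 = ∑ i ∈ Finset.range N, (b i : ℂ) * ω ^ i := by
      unfold expSum; rw [← hωdef]; simp
    rw [h1, h2, hc', shift_eq hN0 hω1 (fun i => (b i : ℂ)) c' hc'N] at hc1
    have h4 : ∑ i ∈ Finset.range N, (t i : ℂ) * ω ^ i
        = ∑ i ∈ Finset.range N, ((a i : ℂ) * ω ^ i - (b ((i + (N - c')) % N) : ℂ) * ω ^ i) := by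
      apply Finset.sum_congr rfl
      intro i _
      rw [htdef]
      push_cast
      ring
    rw [h4, Finset.sum_sub_distrib, hc1, sub_self]
  have ht : ∀ i < N, t i = t (i % p) := lem_L2 hp hω t key1
  -- columns
  set u : ℕ → ℤ := fun j => ∑ l ∈ Finset.range p, (a (j + l * p) : ℤ) with hudef
  set v : ℕ → ℤ := fun j => ∑ l ∈ Finset.range p, (b (j + l * p) : ℤ) with hvdef
  have hcollt : ∀ j l, j < p → l < p → j + l * p < N := by
    intro j l hj hl
    rw [hpp']
    have h4 : l * p ≤ (p - 1) * p := Nat.mul_le_mul_right p (by omega)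
    have h5 : (p - 1) * p = p * p - p := by rw [Nat.sub_one_mul]
    have h6 : p ≤ p * p := Nat.le_mul_of_pos_left p hp0
    omega
  have hSu : ∑ j ∈ Finset.range p, u j = ∑ i ∈ Finset.range N, (a i : ℤ) := by
    rw [hpp', sum_range_sq (fun i => (a i : ℤ)) p]
  have hSv : ∑ j ∈ Finset.range p, v j = ∑ i ∈ Finset.range N, (b i : ℤ) := by
    rw [hpp', sum_range_sq (fun i => (b i : ℤ)) p]
  have hSuv : ∑ j ∈ Finset.range p, u j = ∑ j ∈ Finset.range p, v j := by
    rw [hSu, hSv]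
    exact_mod_cast hSab
  -- k = p
  obtain ⟨cp, hcp⟩ := h p hpN
  obtain ⟨e', he'N, he'⟩ := zpow_reduce hN0 hω0 hω1 cp
  have hEa : expSum N a p = ∑ j ∈ Finset.range p, (u j : ℂ) * (ω ^ p) ^ j := by
    unfold expSum
    rw [← hωdef]
    have h1 : ∀ i ∈ Finset.range N, (a i : ℂ) * ω ^ (i * p) = (a i : ℂ) * (ω ^ p) ^ i := by
      intro i _
      rw [← pow_mul, mul_comm p i]
    rw [Finset.sum_congr rfl h1, hpp']
    exact group_cols hp0 hζ1 a
  have hEb : expSum N b p = ∑ j ∈ Finset.range p, (v j : ℂ) * (ω ^ p) ^ j := by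
    unfold expSum
    rw [← hωdef]
    have h1 : ∀ i ∈ Finset.range N, (b i : ℂ) * ω ^ (i * p) = (b i : ℂ) * (ω ^ p) ^ i := by
      intro i _
      rw [← pow_mul, mul_comm p i]
    rw [Finset.sum_congr rfl h1, hpp']
    exact group_cols hp0 hζ1 b
  have heqp : ∑ j ∈ Finset.range p, (u j : ℂ) * (ω ^ p) ^ j
      = ω ^ e' * ∑ j ∈ Finset.range p, (v j : ℂ) * (ω ^ p) ^ j := by
    rw [← hEa, ← hEb, hcp, he']
  obtain ⟨d, hdp, hdv⟩ := step_kp hp hω u v hSuv e' he'N heqp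
  -- column sums of the shifted b sequence
  have hVcol : ∀ j, ∑ l ∈ Finset.range p, (b ((j + (N - c') + l * p) % N) : ℤ)
      = v ((j + (N - c')) % p) := by
    intro j
    have h1 := col_sum (fun m => (b m : ℤ)) hp0 (j + (N - c'))
    rw [← hpp'] at h1
    exact h1
  have htcol : ∀ j l, j < p → l < p → t (j + l * p) = t j := by
    intro j l hj hl
    have h1 := ht (j + l * p) (hcollt j l hj hl)
    rw [Nat.add_mul_mod_self_right, Nat.mod_eq_of_lt hj] at h1
    exact h1
  have hub : ∀ j, j < p → 0 ≤ u j ∧ u j ≤ p := by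
    intro j hj
    constructor
    · apply Finset.sum_nonneg; intro l _; positivity
    · have h5 : ∀ l ∈ Finset.range p, (a (j + l * p) : ℤ) ≤ 1 := by
        intro l hl
        have h6 := ha (j + l * p) (hcollt j l hj (Finset.mem_range.1 hl))
        have h7 : a (j + l * p) ≤ 1 := by omega
        exact_mod_cast h7
      have h8 := Finset.sum_le_sum h5
      rw [Finset.sum_const, Finset.card_range, nsmul_eq_mul, mul_one] at h8
      exact h8
  have hvb : ∀ j, j < p → 0 ≤ v j ∧ v j ≤ p := by
    intro j hj
    constructor
    · apply Finset.sum_nonneg; intro l _; positivity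
    · have h5 : ∀ l ∈ Finset.range p, (b (j + l * p) : ℤ) ≤ 1 := by
        intro l hl
        have h6 := hb (j + l * p) (hcollt j l hj (Finset.mem_range.1 hl))
        have h7 : b (j + l * p) ≤ 1 := by omega
        exact_mod_cast h7
      have h8 := Finset.sum_le_sum h5
      rw [Finset.sum_const, Finset.card_range, nsmul_eq_mul, mul_one] at h8
      exact h8
  have htr : ∀ j < N, t j = -1 ∨ t j = 0 ∨ t j = 1 := by
    intro j hj
    have h1 := ha j hj
    have h2 := hb ((j + (N - c')) % N) (Nat.mod_lt _ hN0)
    rw [htdef]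
    simp only []
    omega
  have hev : ∀ j < p, (t j = 0 ∧ u j = v ((j + (N - c')) % p))
      ∨ (t j = 1 ∧ u j = p ∧ v ((j + (N - c')) % p) = 0)
      ∨ (t j = -1 ∧ u j = 0 ∧ v ((j + (N - c')) % p) = p) := by
    intro j hj
    have hcolsum : u j - v ((j + (N - c')) % p) = p * t j := by
      rw [← hVcol j, hudef]
      simp only []
      rw [← Finset.sum_sub_distrib]
      have h6 : ∀ l ∈ Finset.range p,
          (a (j + l * p) : ℤ) - (b ((j + (N - c') + l * p) % N) : ℤ) = t j := by
        intro l hl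
        have h1 : j + (N - c') + l * p = j + l * p + (N - c') := by ring
        rw [h1, ← htcol j l hj (Finset.mem_range.1 hl), htdef]
      rw [Finset.sum_congr rfl h6, Finset.sum_const, Finset.card_range, nsmul_eq_mul]
    have h7 := hub j hj
    have h8 := hvb ((j + (N - c')) % p) (Nat.mod_lt _ hp0)
    have h9 := htr j (lt_trans hj hpN)
    rcases h9 with h9 | h9 | h9
    · right; right
      refine ⟨h9, ?_, ?_⟩ <;> (rw [h9] at hcolsum; omega)
    · left
      refine ⟨h9, ?_⟩
      rw [h9] at hcolsum; omega
    · right; left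
      refine ⟨h9, ?_, ?_⟩ <;> (rw [h9] at hcolsum; omega)
  by_cases hA : ∀ j, j < p → t j = 0
  · -- all zero: b is the shift of a by c'
    refine ⟨c', fun i hi => ?_⟩
    have hx : (i + c') % N < N := Nat.mod_lt _ hN0
    have h1 : t ((i + c') % N) = 0 := by
      rw [ht _ hx]
      exact hA _ (Nat.mod_lt _ hp0)
    rw [htdef] at h1
    simp only [] at h1
    rw [mod_cancel hi hcc'] at h1
    omega
  · push_neg at hA
    obtain ⟨j0, hj0p, hj0⟩ := hA
    set w := (N - c') + d with hwdef
    have hφ : ∀ j : ℕ, ((j + (N - c')) % p + d) % p = (j + w) % p := by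
      intro j
      rw [Nat.mod_add_mod, hwdef, add_assoc]
    have hbase : u j0 = 0 ∨ u j0 = p := by
      rcases hev j0 hj0p with ⟨h1, _⟩ | ⟨_, h1, _⟩ | ⟨_, h1, _⟩
      · exact absurd h1 hj0
      · right; exact h1
      · left; exact h1
    by_cases hw : w % p = 0
    · exfalso
      have hid : (j0 + w) % p = j0 := by
        rw [Nat.add_mod, hw, Nat.add_zero, Nat.mod_mod_of_dvd _ dvd_rfl,
          Nat.mod_eq_of_lt hj0p]
      have h2 := hdv ((j0 + (N - c')) % p) (Nat.mod_lt _ hp0)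
      rw [hφ j0, hid] at h2
      rcases hev j0 hj0p with ⟨h1, _⟩ | ⟨_, h1, h3⟩ | ⟨_, h1, h3⟩
      · exact hj0 h1
      · rw [h2, h1] at h3
        have : (p : ℤ) ≠ 0 := by exact_mod_cast hp0.ne'
        exact this h3
      · rw [h2, h1] at h3
        have : (p : ℤ) ≠ 0 := by exact_mod_cast hp0.ne'
        exact this h3.symm
    · -- propagate along the orbit of the shift by w
      have hstep : ∀ j, j < p → (u j = 0 ∨ u j = p) → (u ((j + w) % p) = 0 ∨ u ((j + w) % p) = p) := by
        intro j hj hu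
        have h2 := hdv ((j + (N - c')) % p) (Nat.mod_lt _ hp0)
        rw [hφ j] at h2
        rcases hev j hj with ⟨_, h1⟩ | ⟨_, h1, h3⟩ | ⟨_, h1, h3⟩
        · rw [← h2, ← h1]; exact hu
        · left; rw [← h2]; exact h3
        · right; rw [← h2]; exact h3
      have hiter : ∀ k : ℕ, u ((j0 + k * w) % p) = 0 ∨ u ((j0 + k * w) % p) = p := by
        intro k
        induction k with
        | zero => simpa [Nat.mod_eq_of_lt hj0p] using hbase
        | succ k ih =>
            have h1 : (j0 + (k + 1) * w) % p = ((j0 + k * w) % p + w) % p := by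
              rw [Nat.mod_add_mod]
              congr 1
              ring
            rw [h1]
            exact hstep _ (Nat.mod_lt _ hp0) ih
      haveI : Fact p.Prime := ⟨hp⟩
      have hWne : (w : ZMod p) ≠ 0 := by
        rw [Ne, ZMod.natCast_eq_zero_iff]
        intro hdvd
        exact hw (Nat.mod_eq_zero_of_dvd hdvd)
      have hall : ∀ j, j < p → (u j = 0 ∨ u j = p) := by
        intro j hj
        set K : ZMod p := (((j : ZMod p) - (j0 : ZMod p)) * (w : ZMod p)⁻¹) with hK
        have hcast : ((j0 + K.val * w : ℕ) : ZMod p) = (j : ZMod p) := by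
          push_cast
          rw [ZMod.natCast_zmod_val, hK, mul_assoc, inv_mul_cancel₀ hWne, mul_one]
          ring
        have h1 := hiter K.val
        have h2 : (j0 + K.val * w) % p = j := by
          have h3 := congrArg ZMod.val hcast
          rw [ZMod.val_natCast, ZMod.val_natCast] at h3
          rw [h3, Nat.mod_eq_of_lt hj]
        rwa [h2] at h1
      have hvall : ∀ j, j < p → (v j = 0 ∨ v j = p) := by
        intro j hj
        rw [hdv j hj]
        exact hall _ (Nat.mod_lt _ hp0)
      refine ⟨d, fun i hi => ?_⟩
      have hi' : (i + d) % N < N := Nat.mod_lt _ hN0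
      have hip : i % p < p := Nat.mod_lt _ hp0
      have hi'p : (i + d) % N % p < p := Nat.mod_lt _ hp0
      have hcols : v (i % p) = u ((i + d) % N % p) := by
        have h1 : (i + d) % N % p = (i % p + d) % p := by
          rw [Nat.mod_mod_of_dvd _ ⟨p, hpp'⟩, Nat.mod_add_mod]
        rw [h1]
        exact hdv (i % p) hip
      have hidxb : i = i % p + (i / p) * p := by
        rw [mul_comm]
        exact (Nat.mod_add_div i p).symm
      have hidxa : (i + d) % N = (i + d) % N % p + ((i + d) % N / p) * p := by
        rw [mul_comm]
        exact (Nat.mod_add_div _ p).symm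
      have hdivb : i / p < p := by
        apply Nat.div_lt_of_lt_mul
        rw [← hpp']
        exact hi
      have hdiva : (i + d) % N / p < p := by
        apply Nat.div_lt_of_lt_mul
        rw [← hpp']
        exact hi'
      have hfin := entry_eq_of_col hp0 (fun l => b (i % p + l * p))
        (fun l => a ((i + d) % N % p + l * p))
        (fun l hl => by
          show b (i % p + l * p) ≤ 1
          have h5 := hb (i % p + l * p) (hcollt _ l hip hl)
          omega)
        (fun l hl => by
          show a ((i + d) % N % p + l * p) ≤ 1
          have h5 := ha ((i + d) % N % p + l * p) (hcollt _ l hi'p hl)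
          omega)
        (by exact hcols)
        (by exact hvall (i % p) hip)
        (i / p) ((i + d) % N / p) hdivb hdiva
      rw [← hidxb, ← hidxa] at hfin
      exact hfin
end

section
/- Let n = abc where a, b, c are integers greater than 1, and let ω = e^{2πi/n}. Define the sets A = {1 + ℓa : 0 ≤ ℓ ≤ b−1} ∪ {a + ℓab : 0 ≤ ℓ ≤ c−1} and B = {1 + ℓa : 0 ≤ ℓ ≤ b−1} ∪ {ℓab : 0 ≤ ℓ ≤ c−1}, and the polynomials P(x) = Σ_{i∈A} x^i and Q(x) = Σ_{i∈B} x^i in ℤ[x]. Then: (i) P(x) − Q(x) = (x^a − 1)·(x^{abc} − 1)/(x^{ab} − 1) and P(x) − x^a·Q(x) = x(1 − x^{ab}) as polynomial identities in ℤ[x]; (ii) for every 0 ≤ k ≤ n−1 there exists an integer c_k with P(ω^k) = ω^{c_k}·Q(ω^k); (iii) the binary sequences (a_i)_{i=0}^{n−1} and (b_i)_{i=0}^{n−1} defined by a_i = 1 iff i ∈ A and b_i = 1 iff i ∈ B are not cyclic shifts of each other. -/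
open Polynomial

/-- The set `A = {1 + ℓa : 0 ≤ ℓ ≤ b−1} ∪ {a + ℓab : 0 ≤ ℓ ≤ c−1}`. -/
def setA (a b c : ℕ) : Finset ℕ :=
  ((Finset.range b).image fun ℓ => 1 + ℓ * a) ∪
    ((Finset.range c).image fun ℓ => a + ℓ * (a * b))

/-- The set `B = {1 + ℓa : 0 ≤ ℓ ≤ b−1} ∪ {ℓab : 0 ≤ ℓ ≤ c−1}`. -/
def setB (a b c : ℕ) : Finset ℕ :=
  ((Finset.range b).image fun ℓ => 1 + ℓ * a) ∪
    ((Finset.range c).image fun ℓ => ℓ * (a * b))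

/-- `polyOf S = Σ_{i ∈ S} x^i ∈ ℤ[x]`. -/
noncomputable def polyOf (S : Finset ℕ) : Polynomial ℤ :=
  ∑ i ∈ S, Polynomial.X ^ i

lemma mem_setA_iff {a b c i : ℕ} :
    i ∈ setA a b c ↔ (∃ ℓ, ℓ < b ∧ 1 + ℓ * a = i) ∨ ∃ ℓ, ℓ < c ∧ a + ℓ * (a * b) = i := by
  simp [setA, Finset.mem_union, Finset.mem_image, Finset.mem_range]

lemma mem_setB_iff {a b c i : ℕ} :
    i ∈ setB a b c ↔ (∃ ℓ, ℓ < b ∧ 1 + ℓ * a = i) ∨ ∃ ℓ, ℓ < c ∧ ℓ * (a * b) = i := by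
  simp [setB, Finset.mem_union, Finset.mem_image, Finset.mem_range]

lemma one_add_lt {a b : ℕ} (ha : 1 < a) (hb : 1 < b) {ℓ : ℕ} (hℓ : ℓ < b) :
    1 + ℓ * a < a * b := by
  have h1 : ℓ * a + a ≤ b * a := by
    have : (ℓ + 1) * a ≤ b * a := Nat.mul_le_mul_right a hℓ
    simpa [add_mul] using this
  have h2 : a * b = b * a := mul_comm a b
  omega

lemma inj1 {a b : ℕ} (ha : 1 < a) : ∀ x ∈ Finset.range b, ∀ y ∈ Finset.range b,
    1 + x * a = 1 + y * a → x = y := by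
  intro x _ y _ h
  exact Nat.eq_of_mul_eq_mul_right (by omega) (by omega : x * a = y * a)

lemma inj2 {a b c : ℕ} (ha : 1 < a) (hb : 1 < b) : ∀ x ∈ Finset.range c, ∀ y ∈ Finset.range c,
    a + x * (a * b) = a + y * (a * b) → x = y := by
  intro x _ y _ h
  have hab : 0 < a * b := by
    have := Nat.mul_le_mul ha.le hb.le
    omega
  exact Nat.eq_of_mul_eq_mul_right hab (by omega : x * (a * b) = y * (a * b))

lemma inj3 {a b c : ℕ} (ha : 1 < a) (hb : 1 < b) : ∀ x ∈ Finset.range c, ∀ y ∈ Finset.range c,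
    x * (a * b) = y * (a * b) → x = y := by
  intro x _ y _ h
  have hab : 0 < a * b := by
    have := Nat.mul_le_mul ha.le hb.le
    omega
  exact Nat.eq_of_mul_eq_mul_right hab h

lemma polyOf_setA {a b c : ℕ} (ha : 1 < a) (hb : 1 < b) :
    polyOf (setA a b c) =
      (∑ ℓ ∈ Finset.range b, (Polynomial.X : Polynomial ℤ) ^ (1 + ℓ * a)) +
        ∑ ℓ ∈ Finset.range c, (Polynomial.X : Polynomial ℤ) ^ (a + ℓ * (a * b)) := by
  have hdisj : Disjoint ((Finset.range b).image fun ℓ => 1 + ℓ * a)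
      ((Finset.range c).image fun ℓ => a + ℓ * (a * b)) := by
    rw [Finset.disjoint_left]
    rintro x hx hy
    simp only [Finset.mem_image, Finset.mem_range] at hx hy
    obtain ⟨ℓ, -, rfl⟩ := hx
    obtain ⟨m, -, he⟩ := hy
    have h1 : a ∣ 1 + ℓ * a := he ▸ ⟨1 + m * b, by ring⟩
    have h2 : a ∣ 1 := by
      rw [add_comm] at h1
      exact (Nat.dvd_add_right (dvd_mul_left a ℓ)).mp h1
    have := Nat.le_of_dvd one_pos h2
    omega
  unfold polyOf setA
  rw [Finset.sum_union hdisj, Finset.sum_image (inj1 ha), Finset.sum_image (inj2 ha hb)]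

lemma polyOf_setB {a b c : ℕ} (ha : 1 < a) (hb : 1 < b) :
    polyOf (setB a b c) =
      (∑ ℓ ∈ Finset.range b, (Polynomial.X : Polynomial ℤ) ^ (1 + ℓ * a)) +
        ∑ ℓ ∈ Finset.range c, (Polynomial.X : Polynomial ℤ) ^ (ℓ * (a * b)) := by
  have hdisj : Disjoint ((Finset.range b).image fun ℓ => 1 + ℓ * a)
      ((Finset.range c).image fun ℓ => ℓ * (a * b)) := by
    rw [Finset.disjoint_left]
    rintro x hx hy
    simp only [Finset.mem_image, Finset.mem_range] at hx hy
    obtain ⟨ℓ, -, rfl⟩ := hx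
    obtain ⟨m, -, he⟩ := hy
    have h1 : a ∣ 1 + ℓ * a := he ▸ ⟨m * b, by ring⟩
    have h2 : a ∣ 1 := by
      rw [add_comm] at h1
      exact (Nat.dvd_add_right (dvd_mul_left a ℓ)).mp h1
    have := Nat.le_of_dvd one_pos h2
    omega
  unfold polyOf setB
  rw [Finset.sum_union hdisj, Finset.sum_image (inj1 ha), Finset.sum_image (inj3 ha hb)]

lemma identity1 {a b c : ℕ} (ha : 1 < a) (hb : 1 < b) :
    polyOf (setA a b c) - polyOf (setB a b c) =
      (Polynomial.X ^ a - 1) * ∑ ℓ ∈ Finset.range c, (Polynomial.X : Polynomial ℤ) ^ (a * b * ℓ) := by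
  rw [polyOf_setA ha hb, polyOf_setB ha hb, Finset.mul_sum]
  have h : ∀ S2 S3 S1 : Polynomial ℤ, (S1 + S2) - (S1 + S3) = S2 - S3 := by intros; ring
  rw [h, ← Finset.sum_sub_distrib]
  refine Finset.sum_congr rfl fun ℓ _ => ?_
  rw [mul_comm ℓ (a * b), pow_add, sub_mul, one_mul]

lemma identity2 {a b c : ℕ} (ha : 1 < a) (hb : 1 < b) :
    polyOf (setA a b c) - Polynomial.X ^ a * polyOf (setB a b c) =
      Polynomial.X * (1 - Polynomial.X ^ (a * b)) := by
  rw [polyOf_setA ha hb, polyOf_setB ha hb, mul_add, Finset.mul_sum, Finset.mul_sum]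
  have h2 : ∀ ℓ : ℕ, (Polynomial.X : Polynomial ℤ) ^ a * Polynomial.X ^ (ℓ * (a * b)) =
      Polynomial.X ^ (a + ℓ * (a * b)) := fun ℓ => by rw [pow_add]
  have h1 : ∀ ℓ : ℕ, (Polynomial.X : Polynomial ℤ) ^ a * Polynomial.X ^ (1 + ℓ * a) =
      Polynomial.X ^ (1 + (ℓ + 1) * a) := fun ℓ => by
    rw [← pow_add]; congr 1; ring
  simp only [h1, h2]
  have h : ∀ S1 S2 T : Polynomial ℤ, (S1 + S2) - (T + S2) = S1 - T := by intros; ring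
  rw [h, ← Finset.sum_sub_distrib,
    Finset.sum_range_sub' (fun ℓ => (Polynomial.X : Polynomial ℤ) ^ (1 + ℓ * a)) b]
  simp only [zero_mul, add_zero, pow_one]
  rw [mul_sub, mul_one, ← pow_succ', mul_comm b a]
  ring_nf

theorem stmt_7 (a b c : ℕ) (ha : 1 < a) (hb : 1 < b) (hc : 1 < c) :
    -- (i) polynomial identities in ℤ[x]
    (polyOf (setA a b c) - polyOf (setB a b c) =
        (Polynomial.X ^ a - 1) * ∑ ℓ ∈ Finset.range c, (Polynomial.X : Polynomial ℤ) ^ (a * b * ℓ)) ∧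
    (polyOf (setA a b c) - Polynomial.X ^ a * polyOf (setB a b c) =
        Polynomial.X * (1 - Polynomial.X ^ (a * b))) ∧
    -- (ii) evaluations at n-th roots of unity agree up to a power of ω
    (∀ k < a * b * c, ∃ ck : ℤ,
      Polynomial.aeval (primRoot (a * b * c) ^ k) (polyOf (setA a b c)) =
        primRoot (a * b * c) ^ ck *
          Polynomial.aeval (primRoot (a * b * c) ^ k) (polyOf (setB a b c))) ∧
    -- (iii) the associated binary sequences are not cyclic shifts of each other
    ¬ ∃ j : ℕ, ∀ i < a * b * c,
        (if i ∈ setB a b c then 1 else 0 : ℕ) =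
          (if (i + j) % (a * b * c) ∈ setA a b c then 1 else 0) := by
  have hab : 1 < a * b := by
    have := Nat.mul_le_mul ha hb; omega
  have hn1 : 1 < a * b * c := by
    have := Nat.mul_le_mul hab hc; omega
  have habn : a * b < a * b * c := by
    have h2 : a * b * 2 ≤ a * b * c := Nat.mul_le_mul_left _ hc
    omega
  have haab : a < a * b := by
    have := Nat.mul_le_mul_left a hb
    omega
  refine ⟨identity1 ha hb, identity2 ha hb, ?_, ?_⟩
  · -- part (ii)
    intro k hk
    set n := a * b * c with hn
    have hn0 : n ≠ 0 := by omega
    have hprim : IsPrimitiveRoot (primRoot n) n := Complex.isPrimitiveRoot_exp n hn0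
    set z := primRoot n ^ k with hz
    have hi1 := congrArg (Polynomial.aeval z) (identity1 (a := a) (b := b) (c := c) ha hb)
    have hi2 := congrArg (Polynomial.aeval z) (identity2 (a := a) (b := b) (c := c) ha hb)
    simp only [map_sub, map_mul, map_pow, map_one, map_sum, Polynomial.aeval_X] at hi1 hi2
    by_cases hck : c ∣ k
    · refine ⟨(k * a : ℕ), ?_⟩
      have hz1 : z ^ (a * b) = 1 := by
        rw [hz, ← pow_mul, hprim.pow_eq_one_iff_dvd]
        obtain ⟨t, rfl⟩ := hck
        exact ⟨t, by ring⟩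
      rw [hz1] at hi2
      rw [zpow_natCast, pow_mul]
      linear_combination hi2
    · refine ⟨0, ?_⟩
      have hw : z ^ (a * b) ≠ 1 := by
        intro hone
        rw [hz, ← pow_mul] at hone
        rw [hprim.pow_eq_one_iff_dvd] at hone
        apply hck
        have : a * b * c ∣ a * b * k := by
          rwa [show k * (a * b) = a * b * k by ring] at hone
        exact (mul_dvd_mul_iff_left (show (a * b : ℕ) ≠ 0 by omega)).mp this
      have hsum : ∑ ℓ ∈ Finset.range c, z ^ (a * b * ℓ) = 0 := by
        have hpm : ∀ ℓ, z ^ (a * b * ℓ) = (z ^ (a * b)) ^ ℓ := fun ℓ => pow_mul z (a * b) ℓ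
        simp only [hpm]
        rw [geom_sum_eq hw]
        have hc1 : (z ^ (a * b)) ^ c = 1 := by
          rw [hz, ← pow_mul, ← pow_mul, hprim.pow_eq_one_iff_dvd]
          exact ⟨k, by ring⟩
        rw [hc1, sub_self, zero_div]
      rw [hsum, mul_zero] at hi1
      rw [zpow_zero, one_mul]
      linear_combination hi1
  · -- part (iii)
    rintro ⟨j, hj⟩
    set n := a * b * c with hn
    have hmem : ∀ i, i < n → (i ∈ setB a b c ↔ (i + j) % n ∈ setA a b c) := by
      intro i hi
      have := hj i hi
      by_cases h : i ∈ setB a b c <;> by_cases h' : (i + j) % n ∈ setA a b c <;>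
        simp [h, h'] at this ⊢
    obtain ⟨J, hJ⟩ : ∃ J, J = j % n := ⟨_, rfl⟩
    have hJlt : J < n := hJ ▸ Nat.mod_lt _ (by omega)
    have hshift : ∀ i, (i + j) % n = (i + J) % n := by
      intro i
      conv_lhs => rw [Nat.add_mod]
      conv_rhs => rw [Nat.add_mod]
      rw [hJ, Nat.mod_mod_of_dvd j dvd_rfl]
    have habdvd : a * b ∣ n := ⟨c, rfl⟩
    -- key: two distinct elements of A congruent mod ab force residue a
    have hkey : ∀ x y, x ∈ setA a b c → y ∈ setA a b c → x ≠ y →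
        x % (a * b) = y % (a * b) → x % (a * b) = a := by
      intro x y hx hy hne hcong
      have hmod1 : ∀ ℓ, ℓ < b → (1 + ℓ * a) % (a * b) = 1 + ℓ * a := fun ℓ hℓ =>
        Nat.mod_eq_of_lt (one_add_lt ha hb hℓ)
      have hmod2 : ∀ ℓ : ℕ, (a + ℓ * (a * b)) % (a * b) = a := fun ℓ => by
        rw [Nat.add_mul_mod_self_right, Nat.mod_eq_of_lt haab]
      rw [mem_setA_iff] at hx hy
      rcases hx with ⟨ℓ, hℓ, rfl⟩ | ⟨ℓ, hℓ, rfl⟩ <;>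
        rcases hy with ⟨m, hm, rfl⟩ | ⟨m, hm, rfl⟩
      · rw [hmod1 ℓ hℓ, hmod1 m hm] at hcong
        exact absurd hcong hne
      · rw [hmod1 ℓ hℓ, hmod2 m] at hcong
        exfalso
        rcases Nat.eq_zero_or_pos ℓ with h0 | hpos
        · subst h0; simp at hcong; omega
        · have : a ≤ ℓ * a := Nat.le_mul_of_pos_left a hpos
          omega
      · rw [hmod2 ℓ, hmod1 m hm] at hcong
        exfalso
        rcases Nat.eq_zero_or_pos m with h0 | hpos
        · subst h0; simp at hcong; omega
        · have : a ≤ m * a := Nat.le_mul_of_pos_left a hpos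
          omega
      · exact hmod2 ℓ
    -- J ∈ A
    have h0B : (0 : ℕ) ∈ setB a b c := mem_setB_iff.mpr (Or.inr ⟨0, by omega, by ring⟩)
    have hJA : J ∈ setA a b c := by
      have h := (hmem 0 (by omega)).mp h0B
      rwa [zero_add, ← hJ] at h
    -- (ab + j) % n ∈ A
    have habB : a * b ∈ setB a b c := mem_setB_iff.mpr (Or.inr ⟨1, hc, by ring⟩)
    have hyA : (a * b + j) % n ∈ setA a b c := (hmem (a * b) habn).mp habB
    have hneJy : J ≠ (a * b + j) % n := by
      intro heq
      have h1 : (a * b + j) % n = j % n := by rw [← heq, hJ]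
      have hmeq : a * b + j ≡ 0 + j [MOD n] := by
        unfold Nat.ModEq
        simpa using h1
      have h2 : a * b ≡ 0 [MOD n] := hmeq.add_right_cancel' j
      have h3 : a * b % n = 0 := by simpa [Nat.ModEq] using h2
      rw [Nat.mod_eq_of_lt habn] at h3
      omega
    have hcongJy : J % (a * b) = ((a * b + j) % n) % (a * b) := by
      rw [hJ, Nat.mod_mod_of_dvd _ habdvd, Nat.mod_mod_of_dvd _ habdvd, Nat.add_mod_left]
    have hJab : J % (a * b) = a := hkey J _ hJA hyA hneJy hcongJy
    -- show J = a
    have h1B : (1 : ℕ) ∈ setB a b c := mem_setB_iff.mpr (Or.inl ⟨0, by omega, by ring⟩)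
    have h1A : (1 + j) % n ∈ setA a b c := (hmem 1 (by omega)).mp h1B
    have hJne : J ≠ n - 1 := by
      intro heq
      have hsplit : (a * b) * (c - 1) + (a * b) = a * b * c := by
        rw [← Nat.mul_succ]
        congr 1
        omega
      have hdecomp : n - 1 = (a * b) * (c - 1) + (a * b - 1) := by omega
      have hmodn : (n - 1) % (a * b) = a * b - 1 := by
        rw [hdecomp, Nat.mul_add_mod, Nat.mod_eq_of_lt (by omega : a * b - 1 < a * b)]
      rw [heq, hmodn] at hJab
      -- a = a*b - 1, so a + 1 = a * b, so a ∣ 1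
      have hd : a ∣ a * b := dvd_mul_right a b
      have hab1 : a * b = a + 1 := by omega
      rw [hab1] at hd
      have hda : a ∣ 1 := (Nat.dvd_add_right dvd_rfl).mp hd
      have := Nat.le_of_dvd one_pos hda
      omega
    have h1Jlt : 1 + J < n := by omega
    have h1J : 1 + J ∈ setA a b c := by
      rw [hshift, Nat.mod_eq_of_lt h1Jlt] at h1A
      exact h1A
    have hJa : J = a := by
      rw [mem_setA_iff] at h1J
      rcases h1J with ⟨ℓ, hℓ, he⟩ | ⟨ℓ, hℓ, he⟩
      · -- J = ℓ * a, and J % (a*b) = a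
        have hJeq : J = ℓ * a := by omega
        have hlt : ℓ * a < a * b := by
          have := one_add_lt ha hb hℓ
          omega
        rw [hJeq, Nat.mod_eq_of_lt hlt] at hJab
        omega
      · exfalso
        have hm2 : (a + ℓ * (a * b)) % (a * b) = a := by
          rw [Nat.add_mul_mod_self_right, Nat.mod_eq_of_lt haab]
        have h1a : 1 + a < a * b := by
          have : a * 2 ≤ a * b := Nat.mul_le_mul_left a hb
          omega
        have hm1 : (1 + J) % (a * b) = 1 + a := by
          rw [Nat.add_mod, hJab, Nat.mod_eq_of_lt (show (1:ℕ) < a * b by omega),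
            Nat.mod_eq_of_lt h1a]
        rw [he, hm1] at hm2
        omega
    -- final contradiction with i = 1 + (b-1)*a
    have hi0B : 1 + (b - 1) * a ∈ setB a b c :=
      mem_setB_iff.mpr (Or.inl ⟨b - 1, by omega, rfl⟩)
    have hi0lt : 1 + (b - 1) * a < n := by
      have := one_add_lt ha hb (show b - 1 < b by omega)
      omega
    have hfin : (1 + (b - 1) * a + j) % n ∈ setA a b c := (hmem _ hi0lt).mp hi0B
    have hbalt : 1 + b * a < n := by
      have h2 : a * b * 2 ≤ a * b * c := Nat.mul_le_mul_left _ hc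
      have h3 : a * b = b * a := mul_comm a b
      omega
    rw [hshift, hJa] at hfin
    have hba : (b - 1) * a + a = b * a := by
      have h4 : ((b - 1) + 1) * a = b * a := by congr 1; omega
      rw [← h4, add_mul, one_mul]
    have heq : 1 + (b - 1) * a + a = 1 + b * a := by omega
    rw [heq, Nat.mod_eq_of_lt hbalt] at hfin
    rw [mem_setA_iff] at hfin
    rcases hfin with ⟨ℓ, hℓ, he⟩ | ⟨ℓ, hℓ, he⟩
    · have h5 : ℓ * a = b * a := by omega
      have h6 : ℓ = b := Nat.eq_of_mul_eq_mul_right (by omega) h5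
      omega
    · have hd1 : a ∣ a + ℓ * (a * b) := ⟨1 + ℓ * b, by ring⟩
      rw [he] at hd1
      have hd2 : a ∣ b * a := dvd_mul_left a b
      have hda : a ∣ 1 := by
        rw [add_comm] at hd1
        exact (Nat.dvd_add_right hd2).mp hd1
      have := Nat.le_of_dvd one_pos hda
      omega
end

section
/- There exists an absolute constant c₂ > 0 with the following property. Let n ≥ 2 and t ≥ 1 be integers, and for x ∈ {0,1}^n define Q_t(z; x) = Σ_{j=0}^{n−1} z^{tn} · P(z; x^{(j)})^t · P(z^{−t}; x^{(j)}), which is a polynomial in z of degree at most (t+1)n. If x, x' ∈ {0,1}^n satisfy Q_t(·; x) ≠ Q_t(·; x') as polynomials in z, then for every real L ≥ 2 there exists z ∈ ℂ with |z| = 1 and |arg z| ≤ 1/L such that |Q_t(z; x) − Q_t(z; x')| ≥ n^{−c₂ t L}. -/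
/-- `PP n z x = Σ_{i=1}^{n} x_i z^i` for the string `x` (0-indexed: bit `i` of the
string is `x i` for `0 ≤ i < n`, corresponding to `x_{i+1}`). -/
noncomputable def PP (n : ℕ) (z : ℂ) (x : ℕ → Bool) : ℂ :=
  ∑ i ∈ Finset.range n, (if x i then 1 else 0) * z ^ (i + 1)

/-- The cyclic shift `x^{(j)}`: `x^{(j)}_i = x_{(i+j) mod n}`. -/
def cyclicShift (n : ℕ) (x : ℕ → Bool) (j : ℕ) : ℕ → Bool :=
  fun i => x ((i + j) % n)

/-- `QQ n t z x = Σ_{j=0}^{n−1} z^{tn} · P(z; x^{(j)})^t · P(z^{−t}; x^{(j)})`. -/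
noncomputable def QQ (n t : ℕ) (z : ℂ) (x : ℕ → Bool) : ℂ :=
  ∑ j ∈ Finset.range n,
    z ^ (t * n) * PP n z (cyclicShift n x j) ^ t * PP n (z⁻¹ ^ t) (cyclicShift n x j)


set_option maxHeartbeats 1000000

open Polynomial

noncomputable def Ppoly (n : ℕ) (w : ℕ → Bool) : Polynomial ℤ :=
  ∑ i ∈ Finset.range n, (if w i then 1 else 0) * X ^ (i + 1)

noncomputable def Rpoly (n t : ℕ) (w : ℕ → Bool) : Polynomial ℤ :=
  ∑ i ∈ Finset.range n, (if w i then 1 else 0) * X ^ (t * (n - 1 - i))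

noncomputable def Qpoly (n t : ℕ) (x : ℕ → Bool) : Polynomial ℤ :=
  ∑ j ∈ Finset.range n, Rpoly n t (cyclicShift n x j) * (Ppoly n (cyclicShift n x j)) ^ t

lemma aeval_Ppoly (n : ℕ) (w : ℕ → Bool) (z : ℂ) :
    Polynomial.aeval z (Ppoly n w) = PP n z w := by
  simp [Ppoly, PP, apply_ite]

lemma aeval_Rpoly (n t : ℕ) (w : ℕ → Bool) {z : ℂ} (hz : z ≠ 0) :
    Polynomial.aeval z (Rpoly n t w) = z ^ (t * n) * PP n (z⁻¹ ^ t) w := by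
  rw [Rpoly, PP, map_sum, Finset.mul_sum]
  refine Finset.sum_congr rfl fun i hi => ?_
  rw [Finset.mem_range] at hi
  have key : z ^ (t * (n - 1 - i)) * z ^ (t * (i + 1)) = z ^ (t * n) := by
    rw [← pow_add, ← Nat.mul_add]
    congr 2
    omega
  have h2 : (z⁻¹ ^ t) ^ (i + 1) = (z ^ (t * (i + 1)))⁻¹ := by
    rw [inv_pow, inv_pow, ← pow_mul]
  have hterm : z ^ (t * n) * ((z⁻¹ ^ t) ^ (i + 1)) = z ^ (t * (n - 1 - i)) := by
    rw [h2, ← div_eq_mul_inv, div_eq_iff (pow_ne_zero _ hz)]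
    exact key.symm
  simp only [map_mul, map_pow, aeval_X, apply_ite, map_one, map_zero]
  split_ifs
  · rw [one_mul, one_mul]
    exact hterm.symm
  · simp

lemma aeval_Qpoly (n t : ℕ) (x : ℕ → Bool) {z : ℂ} (hz : z ≠ 0) :
    Polynomial.aeval z (Qpoly n t x) = QQ n t z x := by
  rw [Qpoly, QQ, map_sum]
  refine Finset.sum_congr rfl fun j _ => ?_
  rw [map_mul, map_pow, aeval_Ppoly, aeval_Rpoly n t _ hz]
  ring

lemma natDegree_ite_le (b : Bool) (e : ℕ) :
    (((if b = true then 1 else 0) : Polynomial ℤ) * X ^ e).natDegree ≤ e := by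
  split_ifs
  · simp
  · simp

lemma natDegree_Ppoly_le (n : ℕ) (w : ℕ → Bool) : (Ppoly n w).natDegree ≤ n := by
  refine Polynomial.natDegree_sum_le_of_forall_le _ _ fun i hi => ?_
  rw [Finset.mem_range] at hi
  exact le_trans (natDegree_ite_le (w i) (i + 1)) (by omega)

lemma natDegree_Rpoly_le (n t : ℕ) (w : ℕ → Bool) :
    (Rpoly n t w).natDegree ≤ t * n := by
  refine Polynomial.natDegree_sum_le_of_forall_le _ _ fun i hi => ?_
  refine le_trans (natDegree_ite_le (w i) _) ?_
  exact Nat.mul_le_mul_left t (by omega)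

lemma natDegree_Qpoly_le (n t : ℕ) (x : ℕ → Bool) :
    (Qpoly n t x).natDegree ≤ 2 * t * n := by
  refine Polynomial.natDegree_sum_le_of_forall_le _ _ fun j _ => ?_
  refine le_trans (Polynomial.natDegree_mul_le) ?_
  have h1 := natDegree_Rpoly_le n t (cyclicShift n x j)
  have h2 : ((Ppoly n (cyclicShift n x j)) ^ t).natDegree ≤ t * n :=
    le_trans Polynomial.natDegree_pow_le
      (Nat.mul_le_mul_left t (natDegree_Ppoly_le n (cyclicShift n x j)))
  calc (Rpoly n t (cyclicShift n x j)).natDegree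
        + ((Ppoly n (cyclicShift n x j)) ^ t).natDegree
      ≤ t * n + t * n := add_le_add h1 h2
    _ = 2 * t * n := by ring

lemma abs_PP_le (n : ℕ) (w : ℕ → Bool) {z : ℂ} (hz : ‖z‖ = 1) :
    ‖PP n z w‖ ≤ n := by
  rw [PP]
  refine le_trans (norm_sum_le _ _) ?_
  have h : ∀ i ∈ Finset.range n,
      ‖(if w i = true then (1:ℂ) else 0) * z ^ (i + 1)‖ ≤ 1 := by
    intro i _
    rw [norm_mul, norm_pow, hz, one_pow, mul_one]
    split_ifs <;> simp
  calc ∑ i ∈ Finset.range n,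
        ‖(if w i = true then (1:ℂ) else 0) * z ^ (i + 1)‖
      ≤ ∑ _i ∈ Finset.range n, (1:ℝ) := Finset.sum_le_sum h
    _ = n := by simp

lemma abs_QQ_le (n t : ℕ) (x : ℕ → Bool) {z : ℂ} (hz : ‖z‖ = 1) :
    ‖QQ n t z x‖ ≤ (n : ℝ) ^ (t + 2) := by
  have hz' : ‖z⁻¹ ^ t‖ = 1 := by
    rw [norm_pow, norm_inv, hz]; simp
  rw [QQ]
  refine le_trans (norm_sum_le _ _) ?_
  have h : ∀ j ∈ Finset.range n,
      ‖z ^ (t * n) * PP n z (cyclicShift n x j) ^ t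
        * PP n (z⁻¹ ^ t) (cyclicShift n x j)‖ ≤ (n : ℝ) ^ t * n := by
    intro j _
    rw [norm_mul, norm_mul, norm_pow, norm_pow, hz, one_pow, one_mul]
    have h1 : ‖PP n z (cyclicShift n x j)‖ ≤ (n : ℝ) :=
      abs_PP_le n _ hz
    have h2 : ‖PP n (z⁻¹ ^ t) (cyclicShift n x j)‖ ≤ (n : ℝ) :=
      abs_PP_le n _ hz'
    exact mul_le_mul (pow_le_pow_left₀ (norm_nonneg _) h1 t) h2
      (norm_nonneg _) (pow_nonneg (Nat.cast_nonneg n) t)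
  calc ∑ j ∈ Finset.range n, ‖z ^ (t * n) * PP n z (cyclicShift n x j) ^ t
        * PP n (z⁻¹ ^ t) (cyclicShift n x j)‖
      ≤ ∑ _j ∈ Finset.range n, (n : ℝ) ^ t * n := Finset.sum_le_sum h
    _ = (n:ℝ) * ((n : ℝ) ^ t * n) := by simp [mul_comm]
    _ = (n : ℝ) ^ (t + 2) := by ring


open Real

lemma arg_exp_eq (θ : ℝ) (h1 : -π < θ) (h2 : θ ≤ π) :
    Complex.arg (Complex.exp ((θ:ℂ) * Complex.I)) = θ := by
  rw [Complex.arg_exp_mul_I, toIocMod_eq_self]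
  constructor
  · exact h1
  · linarith

lemma exp_pow_eq (p k : ℕ) (hp : 0 < p) :
    Complex.exp (((2 * π * k / p : ℝ):ℂ) * Complex.I)
      = Complex.exp (2 * π * Complex.I / p) ^ k := by
  rw [← Complex.exp_nat_mul]
  congr 1
  have hp' : (p:ℂ) ≠ 0 := Nat.cast_ne_zero.mpr hp.ne'
  push_cast
  field_simp

lemma arc_count (p : ℕ) (hp : p.Prime) (L : ℝ) (hL : 2 ≤ L) (hpL : 14 * L < (p : ℝ)) :
    (p : ℝ) / (14 * L) ≤
      (((primitiveRoots p ℂ).filter (fun η => |Complex.arg η| ≤ 1 / L)).card : ℝ) := by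
  have hL0 : (0:ℝ) < L := by linarith
  have hp0 : 0 < p := hp.pos
  have hp0' : (0:ℝ) < p := by exact_mod_cast hp0
  have hpi : (3.141592:ℝ) < π := pi_gt_d6
  have hpile : π < 3.15 := pi_lt_d2
  set K0 : ℕ := Nat.floor ((p:ℝ) / (7 * L)) with hK0
  have h7L : (0:ℝ) < 7 * L := by linarith
  have hK0le : (K0 : ℝ) ≤ (p:ℝ) / (7 * L) := Nat.floor_le (by positivity)
  have hK0gt : (p:ℝ) / (7 * L) - 1 < (K0:ℝ) := by
    have := Nat.lt_floor_add_one ((p:ℝ) / (7 * L))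
    linarith
  set f : ℕ → ℂ := fun k => Complex.exp (((2 * π * k / p : ℝ) : ℂ) * Complex.I) with hf
  -- basic angle facts
  have hθfacts : ∀ k : ℕ, k ∈ Finset.Icc 1 K0 →
      0 < 2 * π * k / p ∧ 2 * π * k / p ≤ 1 / L := by
    intro k hk
    rw [Finset.mem_Icc] at hk
    have hk1 : (1:ℝ) ≤ (k:ℝ) := by exact_mod_cast hk.1
    have hkK : (k:ℝ) ≤ (K0:ℝ) := by exact_mod_cast hk.2
    have hkle : (k:ℝ) ≤ (p:ℝ) / (7 * L) := le_trans hkK hK0le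
    constructor
    · positivity
    · calc 2 * π * k / p = 2 * π * ((k:ℝ) / p) := by ring
        _ ≤ 2 * π * ((p:ℝ) / (7 * L) / p) := by
            apply mul_le_mul_of_nonneg_left _ (by positivity)
            exact (div_le_div_iff_of_pos_right hp0').mpr hkle
        _ = 2 * π / (7 * L) := by field_simp
        _ ≤ 1 / L := by
            rw [div_le_div_iff₀ (by linarith) hL0]
            nlinarith
  have hhalf : 1 / L ≤ 1 / 2 := by
    apply one_div_le_one_div_of_le <;> linarith
  have harg : ∀ k : ℕ, k ∈ Finset.Icc 1 K0 → Complex.arg (f k) = 2 * π * k / p := by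
    intro k hk
    obtain ⟨h1, h2⟩ := hθfacts k hk
    exact arg_exp_eq _ (by linarith) (by linarith)
  have hmem : ∀ k ∈ Finset.Icc 1 K0,
      f k ∈ (primitiveRoots p ℂ).filter (fun η => |Complex.arg η| ≤ 1 / L) := by
    intro k hk
    obtain ⟨h1, h2⟩ := hθfacts k hk
    rw [Finset.mem_Icc] at hk
    rw [Finset.mem_filter]
    refine ⟨?_, ?_⟩
    · rw [mem_primitiveRoots hp0]
      have hζ : IsPrimitiveRoot (Complex.exp (2 * π * Complex.I / p)) p :=
        Complex.isPrimitiveRoot_exp p hp0.ne'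
      have hfk : f k = Complex.exp (2 * π * Complex.I / p) ^ k := exp_pow_eq p k hp0
      rw [hfk]
      refine hζ.pow_of_coprime k ?_
      rw [Nat.coprime_comm]
      apply (Nat.Prime.coprime_iff_not_dvd hp).mpr
      intro hdvd
      have hklt : k < p := by
        by_contra hge
        push_neg at hge
        have : (p:ℝ) ≤ (k:ℝ) := by exact_mod_cast hge
        have hkle : (k:ℝ) ≤ (p:ℝ) / (7 * L) := le_trans (by exact_mod_cast hk.2) hK0le
        have : (p:ℝ) ≤ (p:ℝ) / (7 * L) := le_trans this hkle
        have h7L1 : (1:ℝ) < 7 * L := by linarith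
        nlinarith [div_lt_self hp0' h7L1]
      have := Nat.le_of_dvd (by omega) hdvd
      omega
    · rw [harg k (by rw [Finset.mem_Icc]; exact hk), abs_of_pos h1]
      exact h2
  have hinj : Set.InjOn f (Finset.Icc 1 K0) := by
    intro a ha b hb hab
    have h1 := harg a ha
    have h2 := harg b hb
    rw [hab] at h1
    have : 2 * π * (a:ℝ) / p = 2 * π * (b:ℝ) / p := by rw [← h1, ← h2]
    have hab' : (a:ℝ) = (b:ℝ) := by
      field_simp at this
      exact_mod_cast this
    exact_mod_cast hab'
  have hcard : K0 ≤ ((primitiveRoots p ℂ).filter (fun η => |Complex.arg η| ≤ 1 / L)).card := by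
    have := Finset.card_le_card_of_injOn f hmem hinj
    simpa using this
  have : (K0:ℝ) ≤ (((primitiveRoots p ℂ).filter (fun η => |Complex.arg η| ≤ 1 / L)).card : ℝ) := by
    exact_mod_cast hcard
  have hfinal : (p : ℝ) / (14 * L) ≤ (K0:ℝ) := by
    have h14 : (1:ℝ) ≤ (p:ℝ) / (14 * L) := by
      rw [le_div_iff₀ (by linarith)]; linarith
    have : (p:ℝ) / (7 * L) = 2 * ((p:ℝ) / (14 * L)) := by ring
    linarith
  linarith


open Polynomial in
lemma keyNorm (p : ℕ+) (hp : (p:ℕ).Prime) (q : Polynomial ℤ) (hq : q ≠ 0)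
    (hdeg : q.natDegree < (p:ℕ) - 1) :
    1 ≤ ∏ η ∈ primitiveRoots (p:ℕ) ℂ, ‖Polynomial.aeval η q‖ := by
  classical
  haveI : NeZero (p:ℕ) := ⟨p.ne_zero⟩
  set K := CyclotomicField p ℚ
  haveI : NeZero ((p:ℕ):ℚ) := ⟨by exact_mod_cast p.ne_zero⟩
  haveI hcyc : IsCyclotomicExtension {(p:ℕ)} ℚ K := CyclotomicField.isCyclotomicExtension (p:ℕ) ℚ
  have hζ : IsPrimitiveRoot (IsCyclotomicExtension.zeta p ℚ K) p :=
    IsCyclotomicExtension.zeta_spec p ℚ K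
  set ζ := IsCyclotomicExtension.zeta p ℚ K
  have hirr : Irreducible (cyclotomic (p:ℕ) ℚ) := cyclotomic.irreducible_rat p.pos
  -- α
  set qQ : Polynomial ℚ := q.map (Int.castRingHom ℚ) with hqQ
  have hqQne : qQ ≠ 0 := by
    rw [hqQ]
    intro h
    exact hq (Polynomial.map_injective _ Int.cast_injective (by simpa using h))
  set α : K := Polynomial.aeval ζ qQ with hα
  have hαq : α = Polynomial.aeval ζ q := by
    rw [hα, hqQ]
    exact Polynomial.aeval_map_algebraMap (A := ℚ) ζ q
  have hαne : α ≠ 0 := by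
    intro h0
    have hdvd : minpoly ℚ ζ ∣ qQ := minpoly.dvd ℚ ζ h0
    have hmin : cyclotomic (p:ℕ) ℚ = minpoly ℚ ζ :=
      cyclotomic_eq_minpoly_rat hζ p.pos
    have hle : (cyclotomic (p:ℕ) ℚ).natDegree ≤ qQ.natDegree :=
      Polynomial.natDegree_le_of_dvd (hmin ▸ hdvd) hqQne
    rw [natDegree_cyclotomic, Nat.totient_prime hp] at hle
    have : qQ.natDegree = q.natDegree :=
      Polynomial.natDegree_map_eq_of_injective (Int.cast_injective) q
    omega
  -- integrality of the norm
  have hζint : IsIntegral ℤ ζ := hζ.isIntegral p.pos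
  have hαint : IsIntegral ℤ α := by
    rw [hαq]
    have hmem : Polynomial.aeval ζ q ∈ Algebra.adjoin ℤ ({ζ} : Set K) :=
      Polynomial.aeval_mem_adjoin_singleton ℤ ζ
    have hle : Algebra.adjoin ℤ ({ζ} : Set K) ≤ integralClosure ℤ K := by
      rw [Algebra.adjoin_le_iff]
      rintro y hy
      rw [Set.mem_singleton_iff] at hy
      subst hy
      exact hζint
    exact hle hmem
  haveI hfd : FiniteDimensional ℚ K := IsCyclotomicExtension.finiteDimensional {(p:ℕ)} ℚ K
  have hNint : IsIntegral ℤ (Algebra.norm ℚ α) := Algebra.isIntegral_norm ℚ hαint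
  obtain ⟨N, hN⟩ := IsIntegrallyClosed.isIntegral_iff.mp hNint
  have hnormne : Algebra.norm ℚ α ≠ 0 := Algebra.norm_ne_zero_iff.mpr hαne
  have hNne : N ≠ 0 := by
    rintro rfl
    simp at hN
    exact hnormne hN.symm
  have h1 : (1:ℝ) ≤ ‖(algebraMap ℚ ℂ) (Algebra.norm ℚ α)‖ := by
    rw [← hN]
    have h2 : (1:ℝ) ≤ |(N:ℝ)| := by exact_mod_cast Int.one_le_abs hNne
    simpa using h2
  rw [Algebra.norm_eq_prod_embeddings ℚ ℂ α, norm_prod] at h1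
  have hre : ∏ σ : (K →ₐ[ℚ] ℂ), ‖σ α‖
      = ∏ η ∈ primitiveRoots (p:ℕ) ℂ, ‖Polynomial.aeval η q‖ := by
    rw [← Finset.prod_coe_sort (primitiveRoots (p:ℕ) ℂ)
      (fun η => ‖Polynomial.aeval η q‖)]
    refine Fintype.prod_equiv (hζ.embeddingsEquivPrimitiveRoots ℂ hirr) _ _ fun σ => ?_
    congr 1
    rw [hζ.embeddingsEquivPrimitiveRoots_apply_coe ℂ hirr σ]
    have h3 : σ α = Polynomial.aeval (σ ζ) qQ := (Polynomial.aeval_algHom_apply σ ζ qQ).symm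
    rw [h3, hqQ]
    have : (Int.castRingHom ℚ) = algebraMap ℤ ℚ := rfl
    rw [this]
    exact Polynomial.aeval_map_algebraMap (A := ℚ) (σ ζ) q
  rw [hre] at h1
  exact h1


theorem stmt_10 :
    ∃ c₂ : ℝ, 0 < c₂ ∧
      ∀ n t : ℕ, 2 ≤ n → 1 ≤ t → ∀ x x' : ℕ → Bool,
        -- `Q_t(·; x) ≠ Q_t(·; x')` as polynomials in `z`
        (∃ z : ℂ, z ≠ 0 ∧ QQ n t z x ≠ QQ n t z x') →
        ∀ L : ℝ, 2 ≤ L →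
          ∃ z : ℂ, ‖z‖ = 1 ∧ |Complex.arg z| ≤ 1 / L ∧
            (n : ℝ) ^ (-(c₂ * t * L)) ≤ ‖QQ n t z x - QQ n t z x'‖ := by
  classical
  refine ⟨100, by norm_num, ?_⟩
  intro n t hn ht x x' hsep L hL
  obtain ⟨z₀, hz₀, hQ⟩ := hsep
  set D : Polynomial ℤ := Qpoly n t x - Qpoly n t x' with hDdef
  have hDeval : ∀ z : ℂ, z ≠ 0 → Polynomial.aeval z D = QQ n t z x - QQ n t z x' := by
    intro z hz
    rw [hDdef, map_sub, aeval_Qpoly n t x hz, aeval_Qpoly n t x' hz]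
  have hDne : D ≠ 0 := by
    intro h
    apply hQ
    have h2 := hDeval z₀ hz₀
    rw [h, map_zero] at h2
    exact (sub_eq_zero.mp h2.symm)
  set d0 : ℕ := 2 * t * n with hd0
  have hDdeg : D.natDegree ≤ d0 := by
    refine le_trans (Polynomial.natDegree_sub_le _ _) ?_
    exact max_le (natDegree_Qpoly_le n t x) (natDegree_Qpoly_le n t x')
  -- choose a large prime
  set m : ℕ := max (d0 + 1) (Nat.ceil (14 * L) + 1) with hm
  obtain ⟨p, hpm, hp⟩ := Nat.exists_infinite_primes (m + 1)
  have hp0 : 0 < p := hp.pos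
  have hp1 : (1:ℝ) ≤ (p:ℝ) := by exact_mod_cast hp0
  have hL0 : (0:ℝ) < L := by linarith
  have hpL : 14 * L < (p : ℝ) := by
    have h1 : Nat.ceil (14 * L) + 1 ≤ m := le_max_right _ _
    have h2 : Nat.ceil (14 * L) < p := by omega
    have h3 : 14 * L ≤ (Nat.ceil (14 * L) : ℝ) := Nat.le_ceil _
    have h4 : ((Nat.ceil (14 * L) : ℕ) : ℝ) < (p : ℝ) := by exact_mod_cast h2
    linarith
  have hdeg' : D.natDegree < p - 1 := by
    have h1 : d0 + 1 ≤ m := le_max_left _ _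
    omega
  have hkey : (1:ℝ) ≤ ∏ η ∈ primitiveRoots p ℂ, ‖Polynomial.aeval η D‖ := by
    have := keyNorm ⟨p, hp0⟩ hp D hDne hdeg'
    exact this
  -- the arc
  set S := (primitiveRoots p ℂ).filter (fun η => |Complex.arg η| ≤ 1 / L) with hS
  have harc : (p : ℝ) / (14 * L) ≤ (S.card : ℝ) := arc_count p hp L hL hpL
  have hp14 : (1:ℝ) < (p:ℝ) / (14 * L) := by
    rw [lt_div_iff₀ (by linarith)]
    linarith
  have hSne : S.Nonempty := by
    rw [← Finset.card_pos]
    by_contra h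
    push_neg at h
    have h0 : S.card = 0 := by omega
    rw [h0] at harc
    norm_num at harc
    linarith
  obtain ⟨z, hzS, hzmax⟩ :=
    Finset.exists_max_image S (fun η => ‖Polynomial.aeval η D‖) hSne
  have hzS' := hzS
  rw [hS, Finset.mem_filter] at hzS'
  obtain ⟨hzprim, hzarg⟩ := hzS'
  -- properties of primitive roots
  have habs1 : ∀ η ∈ primitiveRoots p ℂ, ‖η‖ = 1 := by
    intro η hη
    have hprim : IsPrimitiveRoot η p := (mem_primitiveRoots hp0).mp hη
    have := Complex.norm_eq_one_of_pow_eq_one hprim.pow_eq_one hp0.ne'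
    exact this
  have hzabs : ‖z‖ = 1 := habs1 z hzprim
  have hzne : z ≠ 0 := by
    intro h
    rw [h] at hzabs
    simp at hzabs
  refine ⟨z, hzabs, hzarg, ?_⟩
  rw [← hDeval z hzne]
  by_contra hlt
  push_neg at hlt
  -- bounds
  have hn1 : (1:ℝ) < (n:ℝ) := by exact_mod_cast hn
  have hn0 : (0:ℝ) < (n:ℝ) := by linarith
  have ht1 : (1:ℝ) ≤ (t:ℝ) := by exact_mod_cast ht
  set M : ℝ := (n:ℝ) ^ (t + 3) with hM
  have hM1 : (1:ℝ) ≤ M := by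
    rw [hM]
    exact one_le_pow₀ hn1.le
  have hbound : ∀ η ∈ primitiveRoots p ℂ, ‖Polynomial.aeval η D‖ ≤ M := by
    intro η hη
    have h1 : ‖η‖ = 1 := habs1 η hη
    have h2 : η ≠ 0 := by intro h; rw [h] at h1; simp at h1
    rw [hDeval η h2]
    have h3 : ‖QQ n t η x - QQ n t η x'‖
        ≤ ‖QQ n t η x‖ + ‖QQ n t η x'‖ := by
      have := norm_sub_le (QQ n t η x) (QQ n t η x')
      simpa using this
    have h4 := abs_QQ_le n t x h1
    have h5 := abs_QQ_le n t x' h1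
    have h6 : (n:ℝ) ^ (t + 2) + (n:ℝ) ^ (t + 2) ≤ M := by
      rw [hM]
      have : (n:ℝ) ^ (t + 3) = (n:ℝ) ^ (t + 2) * n := by ring
      rw [this]
      have hn2 : (2:ℝ) ≤ (n:ℝ) := by exact_mod_cast hn
      nlinarith [mul_nonneg (le_of_lt (pow_pos hn0 (t + 2))) (show (0:ℝ) ≤ (n:ℝ) - 2 by linarith)]
    linarith
  -- split the product
  have hsub : S ⊆ primitiveRoots p ℂ := Finset.filter_subset _ _
  have hsplit : (∏ η ∈ primitiveRoots p ℂ \ S, ‖Polynomial.aeval η D‖)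
      * ∏ η ∈ S, ‖Polynomial.aeval η D‖
      = ∏ η ∈ primitiveRoots p ℂ, ‖Polynomial.aeval η D‖ :=
    Finset.prod_sdiff hsub
  set B : ℝ := (n : ℝ) ^ (-(100 * (t:ℝ) * L)) with hB
  have hB0 : 0 < B := Real.rpow_pos_of_pos hn0 _
  have hSprod : ∏ η ∈ S, ‖Polynomial.aeval η D‖ ≤ B ^ S.card := by
    rw [← Finset.prod_const]
    refine Finset.prod_le_prod (fun η _ => norm_nonneg _) (fun η hη => ?_)
    exact le_of_lt (lt_of_le_of_lt (hzmax η hη) hlt)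
  have hrest : ∏ η ∈ primitiveRoots p ℂ \ S, ‖Polynomial.aeval η D‖ ≤ M ^ p := by
    calc ∏ η ∈ primitiveRoots p ℂ \ S, ‖Polynomial.aeval η D‖
        ≤ ∏ η ∈ primitiveRoots p ℂ \ S, M := by
          refine Finset.prod_le_prod (fun η _ => norm_nonneg _) (fun η hη => ?_)
          exact hbound η (Finset.mem_sdiff.mp hη).1
      _ = M ^ (primitiveRoots p ℂ \ S).card := Finset.prod_const M
      _ ≤ M ^ p := by
          refine pow_le_pow_right₀ hM1 ?_
          calc (primitiveRoots p ℂ \ S).card ≤ (primitiveRoots p ℂ).card :=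
                Finset.card_le_card (Finset.sdiff_subset)
            _ = p.totient := (Complex.isPrimitiveRoot_exp p hp0.ne').card_primitiveRoots
            _ ≤ p := Nat.totient_le p
  -- numeric contradiction
  have hcombine : (1:ℝ) ≤ M ^ p * B ^ S.card := by
    rw [← hsplit] at hkey
    calc (1:ℝ) ≤ _ := hkey
      _ ≤ M ^ p * B ^ S.card := by
          refine mul_le_mul hrest hSprod ?_ ?_
          · exact Finset.prod_nonneg (fun η _ => norm_nonneg _)
          · positivity
  have hMp : M ^ p = (n:ℝ) ^ ((((t+3)*p : ℕ)) : ℝ) := by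
    rw [hM, ← pow_mul, Real.rpow_natCast]
  have hBk : B ^ S.card = (n:ℝ) ^ (-(100 * (t:ℝ) * L) * (S.card:ℝ)) := by
    rw [hB, ← Real.rpow_natCast ((n:ℝ) ^ (-(100 * (t:ℝ) * L))) S.card,
      ← Real.rpow_mul hn0.le]
  have hlt1 : M ^ p * B ^ S.card < 1 := by
    rw [hMp, hBk, ← Real.rpow_add hn0]
    apply Real.rpow_lt_one_of_one_lt_of_neg hn1
    have e1 : ((((t+3)*p : ℕ)) : ℝ) = ((t:ℝ)+3) * p := by push_cast; ring
    rw [e1]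
    have e2 : 100 * (t:ℝ) * L * ((p:ℝ)/(14*L)) = (100 * (t:ℝ) * (p:ℝ))/14 := by
      field_simp
    have e3 : 100 * (t:ℝ) * L * ((p:ℝ)/(14*L)) ≤ 100 * (t:ℝ) * L * (S.card:ℝ) :=
      mul_le_mul_of_nonneg_left harc (by positivity)
    have e4 : ((t:ℝ)+3) * p < (100 * (t:ℝ) * (p:ℝ))/14 := by
      rw [lt_div_iff₀ (by norm_num : (0:ℝ) < 14)]
      nlinarith [mul_pos (show (0:ℝ) < (p:ℝ) by linarith)
        (show (0:ℝ) < 86*(t:ℝ) - 42 by linarith)]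
    linarith
  linarith
end
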